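/- arXiv:1412.0882 — 7 statements merged into one kernel-verified Lean document; each statement's English description precedes it below -/
import Mathlib

section
/- For every real x ≥ 0 one has (1−p)·π([x, αx)) = p·π([x−β, x)). (Lemma 'hf': π([x,αx]) = (p/(1−p))·π([x−β,x]).) -/
open MeasureTheory Set

lemma split_Iio (π : MeasureTheory.Measure ℝ) {a b : ℝ} (h : a ≤ b) :
    π (Iio b) = π (Iio a) + π (Ico a b) := by
  rw [← Iio_union_Ico_eq_Iio h, measure_union _ measurableSet_Ico]
  rw [Set.disjoint_left]
  intro y hy hy'
  exact absurd hy'.1 (not_le.2 hy)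

/-- Lemma `hf`: for every `x ≥ 0`, `(1-p)·π([x, αx)) = p·π([x-β, x))`. -/
theorem stmt0 (p α β : ℝ) (hp0 : 0 < p) (hp1 : p < 1) (hα : 1 < α) (hβ : 0 < β)
    (π : Measure ℝ) [IsProbabilityMeasure π] (hsupp : π (Ici (0 : ℝ)) = 1)
    (hinv : ∀ A : Set ℝ, MeasurableSet A →
      π A = ENNReal.ofReal p * π ((fun y => y + β) ⁻¹' A)
          + ENNReal.ofReal (1 - p) * π ((fun y => y / α) ⁻¹' A)) :
    ∀ x : ℝ, 0 ≤ x →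
      ENNReal.ofReal (1 - p) * π (Ico x (α * x)) =
        ENNReal.ofReal p * π (Ico (x - β) x) := by
  intro x hx
  have hα0 : (0:ℝ) < α := lt_trans one_pos hα
  have hxa : x ≤ α * x := le_mul_of_one_le_left hx hα.le
  have hpre1 : (fun y : ℝ => y + β) ⁻¹' Iio x = Iio (x - β) := by
    ext y; simp [lt_sub_iff_add_lt]
  have hpre2 : (fun y : ℝ => y / α) ⁻¹' Iio x = Iio (α * x) := by
    ext y; simp [div_lt_iff₀ hα0, mul_comm]
  have key := hinv (Iio x) measurableSet_Iio
  rw [hpre1, hpre2] at key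
  set P := ENNReal.ofReal p with hP
  set Q := ENNReal.ofReal (1 - p) with hQ
  set a := π (Iio (x - β)) with ha
  set b := π (Ico (x - β) x) with hb
  set c := π (Ico x (α * x)) with hc
  have hsplit1 : π (Iio x) = a + b := split_Iio π (by linarith)
  have hsplit2 : π (Iio (α * x)) = (a + b) + c := by
    rw [split_Iio π hxa, hsplit1]
  rw [hsplit1, hsplit2] at key
  have hPQ : P + Q = 1 := by
    rw [hP, hQ, ← ENNReal.ofReal_add hp0.le (by linarith)]
    norm_num
  have hane : a ≠ ⊤ := (measure_lt_top π _).ne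
  have hbne : b ≠ ⊤ := (measure_lt_top π _).ne
  have hQne : Q * b ≠ ⊤ := ENNReal.mul_ne_top ENNReal.ofReal_ne_top hbne
  -- key : a + b = P * a + Q * ((a + b) + c)
  have key2 : a + b = a + (Q * b + Q * c) := by
    calc a + b = P * a + Q * ((a + b) + c) := key
    _ = (P + Q) * a + (Q * b + Q * c) := by ring
    _ = a + (Q * b + Q * c) := by rw [hPQ, one_mul]
  have key3 : b = Q * b + Q * c := (ENNReal.add_right_inj hane).1 key2
  have key4 : Q * b + P * b = Q * b + Q * c := by
    rw [← key3]
    calc Q * b + P * b = (P + Q) * b := by ring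
    _ = b := by rw [hPQ, one_mul]
  exact ((ENNReal.add_right_inj hQne).1 key4).symm
end

section
/- For every integer n ≥ 1 one has (1−p)·π([nβ, (n+1)β)) ≤ p·π([(n−1)β, nβ)); in particular, when p ≤ 1/2 the sequence n ↦ π([nβ,(n+1)β)) is non-increasing. -/
open MeasureTheory Set

/-- For every integer `n ≥ 1`, `(1-p)·π([nβ,(n+1)β)) ≤ p·π([(n-1)β, nβ))`; in
particular, when `p ≤ 1/2` the sequence `n ↦ π([nβ,(n+1)β))` is non-increasing. -/
theorem stmt1 (p α β : ℝ) (hp0 : 0 < p) (hp1 : p < 1) (hα : 2 ≤ α) (hβ : 0 < β)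
    (π : Measure ℝ) [IsProbabilityMeasure π] (hsupp : π (Ici (0 : ℝ)) = 1)
    (hinv : ∀ A : Set ℝ, MeasurableSet A →
      π A = ENNReal.ofReal p * π ((fun y => y + β) ⁻¹' A)
          + ENNReal.ofReal (1 - p) * π ((fun y => y / α) ⁻¹' A)) :
    (∀ n : ℕ, 1 ≤ n →
      ENNReal.ofReal (1 - p) * π (Ico ((n : ℝ) * β) (((n : ℝ) + 1) * β)) ≤
        ENNReal.ofReal p * π (Ico (((n : ℝ) - 1) * β) ((n : ℝ) * β))) ∧
    (p ≤ 1 / 2 → Antitone fun n : ℕ => π (Ico ((n : ℝ) * β) (((n : ℝ) + 1) * β))) := by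
  have hαpos : (0:ℝ) < α := lt_of_lt_of_le two_pos hα
  have hIio : π (Iio (0:ℝ)) = 0 := by
    have h := measure_compl (measurableSet_Ici (a := (0:ℝ))) (measure_ne_top π _)
    rw [hsupp, compl_Ici] at h
    simp [h]
  -- the main inequality
  have key : ∀ n : ℕ, 1 ≤ n →
      ENNReal.ofReal (1 - p) * π (Ico ((n : ℝ) * β) (((n : ℝ) + 1) * β)) ≤
        ENNReal.ofReal p * π (Ico (((n : ℝ) - 1) * β) ((n : ℝ) * β)) := by
    intro n hn
    set N : ℝ := (n : ℝ) with hN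
    have hN1 : (1:ℝ) ≤ N := by rw [hN]; exact_mod_cast hn
    set P := ENNReal.ofReal p with hP
    set Q := ENNReal.ofReal (1 - p) with hQ
    have hPQ : P + Q = 1 := by
      rw [hP, hQ, ← ENNReal.ofReal_add hp0.le (by linarith), ← ENNReal.ofReal_one]
      norm_num
    have h1 := hinv (Ico 0 (N * β)) measurableSet_Ico
    have hpre1 : (fun y => y + β) ⁻¹' Ico 0 (N * β) = Ico (-β) ((N - 1) * β) := by
      rw [preimage_add_const_Ico]
      congr 1 <;> ring
    have hpre2 : (fun y => y / α) ⁻¹' Ico 0 (N * β) = Ico 0 (α * (N * β)) := by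
      ext y
      simp only [mem_preimage, mem_Ico]
      constructor
      · rintro ⟨h₁, h₂⟩
        constructor
        · have := (le_div_iff₀ hαpos).1 h₁
          linarith
        · calc y = α * (y / α) := by field_simp
            _ < α * (N * β) := by exact (mul_lt_mul_iff_right₀ hαpos).2 h₂
      · rintro ⟨h₁, h₂⟩
        exact ⟨div_nonneg h₁ hαpos.le, (div_lt_iff₀ hαpos).2 (by linarith [h₂])⟩
    rw [hpre1, hpre2] at h1
    -- remove the negative part
    have hshift : π (Ico (-β) ((N - 1) * β)) = π (Ico 0 ((N - 1) * β)) := by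
      apply le_antisymm
      · calc π (Ico (-β) ((N - 1) * β)) ≤ π (Iio 0 ∪ Ico 0 ((N - 1) * β)) := by
              apply measure_mono
              intro x hx
              rcases lt_or_ge x 0 with h | h
              · exact Or.inl h
              · exact Or.inr ⟨h, hx.2⟩
          _ ≤ π (Iio 0) + π (Ico 0 ((N - 1) * β)) := measure_union_le _ _
          _ = π (Ico 0 ((N - 1) * β)) := by rw [hIio, zero_add]
      · exact measure_mono (Ico_subset_Ico_left (by linarith))
    rw [hshift] at h1
    -- compare the scaled part
    have hscale : π (Ico 0 ((N + 1) * β)) ≤ π (Ico 0 (α * (N * β))) := by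
      apply measure_mono (Ico_subset_Ico_right ?_)
      nlinarith [mul_le_mul_of_nonneg_right hα (by linarith : (0:ℝ) ≤ N), hβ.le, hN1]
    -- splitting identities
    have hsplit1 : π (Ico 0 (N * β)) =
        π (Ico 0 ((N - 1) * β)) + π (Ico ((N - 1) * β) (N * β)) := by
      rw [← measure_union (Ico_disjoint_Ico_same) measurableSet_Ico,
        Ico_union_Ico_eq_Ico (by nlinarith) (by nlinarith)]
    have hsplit2 : π (Ico 0 ((N + 1) * β)) =
        π (Ico 0 (N * β)) + π (Ico (N * β) ((N + 1) * β)) := by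
      rw [← measure_union (Ico_disjoint_Ico_same) measurableSet_Ico,
        Ico_union_Ico_eq_Ico (by nlinarith) (by nlinarith)]
    set F := π (Ico 0 ((N - 1) * β))
    set a := π (Ico ((N - 1) * β) (N * β))
    set b := π (Ico (N * β) ((N + 1) * β))
    have hQscale : Q * (F + a + b) ≤ Q * π (Ico 0 (α * (N * β))) := by
      gcongr
      rw [hsplit2, hsplit1] at hscale
      exact le_of_eq_of_le (by ring) hscale
    have hmain : F + (Q * a + Q * b) ≤ F + a := by
      calc F + (Q * a + Q * b) = (P + Q) * F + (Q * a + Q * b) := by rw [hPQ, one_mul]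
        _ = P * F + Q * (F + a + b) := by ring
        _ ≤ P * F + Q * π (Ico 0 (α * (N * β))) := add_le_add_right hQscale _
        _ = π (Ico 0 (N * β)) := h1.symm
        _ = F + a := hsplit1
    have hFne : F ≠ ⊤ := measure_ne_top π _
    have h2 : Q * a + Q * b ≤ a := (ENNReal.add_le_add_iff_left hFne).1 hmain
    have h3 : Q * a + Q * b ≤ Q * a + P * a := by
      calc Q * a + Q * b ≤ a := h2
        _ = (P + Q) * a := by rw [hPQ, one_mul]
        _ = Q * a + P * a := by ring
    exact (ENNReal.add_le_add_iff_left (by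
      exact ENNReal.mul_ne_top ENNReal.ofReal_ne_top (measure_ne_top π _))).1 h3
  refine ⟨key, ?_⟩
  intro hp half
  apply antitone_nat_of_succ_le
  intro n
  have hk := key (n + 1) (Nat.le_add_left 1 n)
  have hc1 : ((n + 1 : ℕ) : ℝ) = (n:ℝ) + 1 := by push_cast; ring
  rw [hc1] at hk
  have hsimp : ((n : ℝ) + 1 - 1) = (n : ℝ) := by ring
  rw [hsimp] at hk
  have hQpos : (0:ℝ) < 1 - p := by linarith
  have hPQ' : ENNReal.ofReal p ≤ ENNReal.ofReal (1 - p) :=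
    ENNReal.ofReal_le_ofReal (by linarith)
  have h4 : ENNReal.ofReal (1 - p) * π (Ico (((n:ℝ) + 1) * β) (((n:ℝ) + 1 + 1) * β)) ≤
      ENNReal.ofReal (1 - p) * π (Ico ((n:ℝ) * β) (((n:ℝ) + 1) * β)) := by
    calc ENNReal.ofReal (1 - p) * π (Ico (((n:ℝ) + 1) * β) (((n:ℝ) + 1 + 1) * β))
        ≤ ENNReal.ofReal p * π (Ico ((n:ℝ) * β) (((n:ℝ) + 1) * β)) := hk
      _ ≤ ENNReal.ofReal (1 - p) * π (Ico ((n:ℝ) * β) (((n:ℝ) + 1) * β)) := by gcongr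
  have h5 := (ENNReal.mul_le_mul_iff_right (a := ENNReal.ofReal (1 - p))
    (by simp [ENNReal.ofReal_eq_zero]; linarith) ENNReal.ofReal_ne_top).1 h4
  simpa [hc1] using h5
end

section
/- For every integer n ≥ 1 one has π([nβ, (n+1)β)) ≤ p·π([(n−1)β, nβ))·(1 + p/((1−p)·n·(α−1))). -/
open MeasureTheory Set

/-- For every integer `n ≥ 1`,
`π([nβ,(n+1)β)) ≤ p·π([(n-1)β, nβ))·(1 + p/((1-p)·n·(α-1)))`. -/
theorem stmt2 (α β : ℕ) (hα : 2 ≤ α) (hβ : 1 ≤ β) (p : ℝ) (hp0 : 0 < p) (hp : p ≤ 1 / 2)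
    (π : Measure ℝ) [IsProbabilityMeasure π] (hsupp : π (Ici (0 : ℝ)) = 1)
    (hinv : ∀ A : Set ℝ, MeasurableSet A →
      π A = ENNReal.ofReal p * π ((fun y => y + (β : ℝ)) ⁻¹' A)
          + ENNReal.ofReal (1 - p) * π ((fun y => y / (α : ℝ)) ⁻¹' A)) :
    ∀ n : ℕ, 1 ≤ n →
      π (Ico ((n : ℝ) * β) (((n : ℝ) + 1) * β)) ≤
        ENNReal.ofReal (p * (1 + p / ((1 - p) * n * ((α : ℝ) - 1)))) *
          π (Ico (((n : ℝ) - 1) * β) ((n : ℝ) * β)) := by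
  intro n hn
  obtain ⟨m, rfl⟩ : ∃ m, n = m + 1 := ⟨n - 1, by omega⟩
  have hα0 : (0:ℝ) < (α:ℝ) := by positivity
  have hβ0 : (0:ℝ) < (β:ℝ) := by exact_mod_cast hβ
  have h1p : (0:ℝ) < 1 - p := by linarith
  set t : ℕ → ℝ := fun k => (π (Ici ((k:ℝ) * β))).toReal with ht
  -- monotonicity
  have hmono : ∀ {j k : ℕ}, j ≤ k → t k ≤ t j := by
    intro j k hjk
    refine (ENNReal.toReal_le_toReal (measure_ne_top _ _) (measure_ne_top _ _)).2 ?_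
    refine measure_mono (Ici_subset_Ici.2 ?_)
    have : (j:ℝ) ≤ (k:ℝ) := by exact_mod_cast hjk
    nlinarith
  -- invariance for tails
  have hinv' : ∀ k : ℕ, t (k+1) = p * t k + (1 - p) * t (α*(k+1)) := by
    intro k
    have hpre1 : (fun y : ℝ => y + (β:ℝ)) ⁻¹' Ici (((k+1:ℕ):ℝ) * β) = Ici (((k:ℕ):ℝ) * β) := by
      ext y
      simp only [mem_preimage, mem_Ici]
      push_cast
      rw [add_mul, one_mul]
      exact ⟨fun h => by linarith, fun h => by linarith⟩
    have hpre2 : (fun y : ℝ => y / (α:ℝ)) ⁻¹' Ici (((k+1:ℕ):ℝ) * β)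
        = Ici (((α*(k+1):ℕ):ℝ) * β) := by
      ext y
      simp only [mem_preimage, mem_Ici]
      rw [le_div_iff₀ hα0]
      push_cast
      constructor <;> intro h <;> nlinarith
    have h0 := hinv (Ici (((k+1:ℕ):ℝ) * β)) measurableSet_Ici
    rw [hpre1, hpre2] at h0
    have h1 := congrArg ENNReal.toReal h0
    rw [ENNReal.toReal_add (ENNReal.mul_ne_top ENNReal.ofReal_ne_top (measure_ne_top π _))
        (ENNReal.mul_ne_top ENNReal.ofReal_ne_top (measure_ne_top π _)),
      ENNReal.toReal_mul, ENNReal.toReal_mul,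
      ENNReal.toReal_ofReal hp0.le, ENNReal.toReal_ofReal h1p.le] at h1
    exact h1
  -- Ico measures as differences of tails
  have hIco : ∀ k : ℕ, π (Ico ((k:ℝ)*β) (((k:ℝ)+1)*β)) = ENNReal.ofReal (t k - t (k+1)) := by
    intro k
    have hle : (((k:ℝ))*β) ≤ (((k+1:ℕ):ℝ) * β) := by push_cast; nlinarith
    have hsub : Ici (((k+1:ℕ):ℝ)*β) ⊆ Ici ((k:ℝ)*β) := Ici_subset_Ici.2 hle
    have hset : Ico ((k:ℝ)*β) (((k:ℝ)+1)*β) = Ici ((k:ℝ)*β) \ Ici (((k+1:ℕ):ℝ)*β) := by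
      rw [Ici_diff_Ici]
      congr 1
      push_cast
      ring
    have hm := measure_diff hsub measurableSet_Ici.nullMeasurableSet (measure_ne_top π _)
    rw [hset, hm]
    rw [show t k - t (k+1)
        = (π (Ici ((k:ℝ)*β))).toReal - (π (Ici (((k+1:ℕ):ℝ)*β))).toReal from rfl]
    rw [← ENNReal.toReal_sub_of_le (measure_mono hsub) (measure_ne_top _ _),
      ENNReal.ofReal_toReal (ne_top_of_le_ne_top (measure_ne_top π _) tsub_le_self)]
  -- the key recursion in real numbers
  have hrec : ∀ k : ℕ, (1-p) * (t (k+1) - t (α*(k+1))) = p * (t k - t (k+1)) := by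
    intro k
    linear_combination hinv' k
  -- setup
  set M : ℕ := (m+1) * (α - 1) with hMdef
  have hM : m + 1 + M = α * (m + 1) := by
    have h1 : α - 1 + 1 = α := by omega
    calc m + 1 + M = (m+1) * ((α-1)+1) := by rw [Nat.mul_add, Nat.mul_one]; omega
    _ = α * (m+1) := by rw [h1, Nat.mul_comm]
  have hMpos : 0 < M := Nat.mul_pos (Nat.succ_pos m) (by omega)
  set S : ℝ := t (α*(m+1)) - t (α*(m+2)) with hSdef
  -- each term of the sum bounds (1-p) S
  have hstep : ∀ j ∈ Finset.range M, (1-p) * S ≤ p * (t (m+1+j) - t (m+1+j+1)) := by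
    intro j hj
    have hj' : j < M := Finset.mem_range.1 hj
    have e1 : m+1+j+1 ≤ α*(m+1) := by rw [← hM]; omega
    have e2 : α*(m+2) ≤ α*(m+1+j+1) := Nat.mul_le_mul_left α (by omega)
    have h1 : t (α*(m+1)) ≤ t (m+1+j+1) := hmono e1
    have h2 : t (α*(m+1+j+1)) ≤ t (α*(m+2)) := hmono e2
    have hSle : S ≤ t (m+1+j+1) - t (α*(m+1+j+1)) := by
      rw [hSdef]; linarith
    calc (1-p) * S ≤ (1-p) * (t (m+1+j+1) - t (α*(m+1+j+1))) :=
          mul_le_mul_of_nonneg_left hSle h1p.le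
      _ = p * (t (m+1+j) - t (m+1+j+1)) := hrec (m+1+j)
  -- telescoping sum
  have hsum1 : ∑ j ∈ Finset.range M, p * (t (m+1+j) - t (m+1+j+1))
      = p * (t (m+1) - t (α*(m+1))) := by
    rw [← Finset.mul_sum]
    congr 1
    have h := Finset.sum_range_sub' (fun j => t (m+1+j)) M
    simp only [← add_assoc] at h
    simpa [hM] using h
  have hsum2 : (M:ℝ) * ((1-p) * S) ≤ p * (t (m+1) - t (α*(m+1))) := by
    have h := Finset.sum_le_sum hstep
    rw [hsum1] at h
    simpa [Finset.sum_const, nsmul_eq_mul] using h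
  -- denominators
  have hMR : (M:ℝ) = ((m:ℝ)+1) * ((α:ℝ)-1) := by
    rw [hMdef]
    push_cast [Nat.cast_sub (by omega : 1 ≤ α)]
    ring
  have hMRpos : (0:ℝ) < (M:ℝ) := by exact_mod_cast hMpos
  have hDn := hrec m
  have hDn1 := hrec (m+1)
  have hSnn : 0 ≤ S := by
    rw [hSdef]
    have := hmono (Nat.mul_le_mul_left α (by omega : m+1 ≤ m+2))
    linarith
  have hAnn : 0 ≤ t m - t (m+1) := by linarith [hmono (by omega : m ≤ m+1)]
  -- key bound
  have hkey : (1-p) * S ≤ p^2 * (t m - t (m+1)) / ((1-p) * M) := by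
    rw [le_div_iff₀ (by positivity)]
    have h1 : (1-p) * ((M:ℝ) * ((1-p)*S)) ≤ (1-p) * (p * (t (m+1) - t (α*(m+1)))) :=
      mul_le_mul_of_nonneg_left hsum2 h1p.le
    have h2 : p * ((1-p) * (t (m+1) - t (α*(m+1)))) = p * (p * (t m - t (m+1))) := by
      rw [hDn]
    nlinarith [h1, h2]
  have hBeq : t (m+1) - t (m+2) = p * (t m - t (m+1)) + (1-p) * S := by
    have e : α*(m+1+1) = α*(m+2) := rfl
    rw [e] at hDn1
    rw [hSdef]
    linarith
  have hα1 : (0:ℝ) < (α:ℝ) - 1 := by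
    have : (2:ℝ) ≤ (α:ℝ) := by exact_mod_cast hα
    linarith
  have hfin : t (m+1) - t (m+2)
      ≤ p * (1 + p / ((1 - p) * ((m:ℝ)+1) * ((α:ℝ) - 1))) * (t m - t (m+1)) := by
    have hr : p * (1 + p / ((1 - p) * ((m:ℝ)+1) * ((α:ℝ) - 1))) * (t m - t (m+1))
        = p * (t m - t (m+1)) + p^2 * (t m - t (m+1)) / ((1-p) * M) := by
      rw [hMR]
      have hm1 : ((m:ℝ)+1) ≠ 0 := by positivity
      field_simp
    rw [hr]
    linarith
  -- lift back to ENNReal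
  have hcnn : 0 ≤ p * (1 + p / ((1 - p) * (((m+1:ℕ)):ℝ) * ((α:ℝ) - 1))) := by
    have hm1 : (0:ℝ) < ((m+1:ℕ):ℝ) := by positivity
    positivity
  have hgset : Ico (((((m+1:ℕ)):ℝ) - 1) * β) ((((m+1:ℕ)):ℝ) * β)
      = Ico ((m:ℝ)*β) (((m:ℝ)+1)*β) := by
    congr 1 <;> push_cast <;> ring
  rw [hgset, hIco m, hIco (m+1), ← ENNReal.ofReal_mul hcnn]
  refine ENNReal.ofReal_le_ofReal ?_
  push_cast
  linarith [hfin]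
end

section
/- Write M₀ = π([0,β)). There exists a constant K > 1 such that for every integer n ≥ 0, M₀·pⁿ ≤ π([nβ, (n+1)β)) ≤ M₀·K·pⁿ. -/
open MeasureTheory Set Filter

lemma maxprin (p : ℝ) (hp0 : 0 < p) (hp : p ≤ 1/2)
    (T : ℕ → ℝ) (hT0 : T 0 = 1)
    (hlim : Tendsto T atTop (nhds 0))
    (hrec : ∀ m : ℕ, T (m+1) ≤ p * T m + (1-p) * T (2*(m+1))) :
    ∀ n, T n ≤ p^n * (2 - p^n) := by
  have hp1 : p < 1 := by linarith
  obtain ⟨d, hd⟩ : ∃ d : ℕ → ℝ, ∀ k, d k = T k - p^k*(2-p^k) := ⟨_, fun k => rfl⟩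
  have hd0 : d 0 = 0 := by rw [hd]; norm_num [hT0]
  have hdrec : ∀ m : ℕ, d (m+1) ≤ p * d m + (1-p) * d (2*(m+1)) := by
    intro m
    have h1 := hrec m
    have ha : 0 < p ^ m := pow_pos hp0 m
    have ha1 : p ^ m ≤ 1 := pow_le_one₀ hp0.le hp1.le
    have e1 : p ^ (m+1) = p * p ^ m := by ring
    have e2 : p ^ (2*(m+1)) = (p * p ^ m)^2 := by rw [← e1]; ring
    have hkey : p * (p^m*(2-p^m)) + (1-p)*((p*p^m)^2*(2-(p*p^m)^2))
        = p*p^m*(2-p*p^m) - (1-p)*p*(p^m)^2*(1-2*p+p^3*(p^m)^2) := by ring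
    have hnn : 0 ≤ (1-p)*p*(p^m)^2*(1-2*p+p^3*(p^m)^2) := by
      have h2 : (0:ℝ) ≤ 1 - 2*p + p^3*(p^m)^2 := by nlinarith [sq_nonneg (p^m), pow_pos hp0 3]
      have h3 : (0:ℝ) ≤ (1-p)*p*(p^m)^2 := mul_nonneg (mul_nonneg (by linarith) hp0.le) (sq_nonneg _)
      exact mul_nonneg h3 h2
    rw [hd, hd, hd, e1, e2]
    linarith [hkey, hnn, h1]
  have hdlim : Tendsto d atTop (nhds 0) := by
    have hpow : Tendsto (fun n : ℕ => p ^ n) atTop (nhds 0) :=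
      tendsto_pow_atTop_nhds_zero_of_lt_one hp0.le hp1
    have hwlim : Tendsto (fun n : ℕ => p ^ n * (2 - p ^ n)) atTop (nhds (0 * (2 - 0))) :=
      hpow.mul (tendsto_const_nhds.sub hpow)
    have h2 : Tendsto (fun k => T k - p^k*(2-p^k)) atTop (nhds 0) := by
      simpa using hlim.sub hwlim
    exact h2.congr (fun k => (hd k).symm)
  intro n
  by_contra hcon
  push_neg at hcon
  have hdn : 0 < d n := by rw [hd]; linarith
  obtain ⟨N, hN⟩ : ∃ N, ∀ k ≥ N, d k ≤ d n / 2 := by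
    have h := hdlim.eventually_le_const (show (0:ℝ) < d n / 2 by linarith)
    exact h.exists_forall_of_atTop
  set F : Finset ℕ := Finset.range (max N n + 1) with hF
  have hnF : n ∈ F := by simp [hF, Nat.lt_succ_iff]
  have hFne : F.Nonempty := ⟨n, hnF⟩
  obtain ⟨m, hmF, hmS⟩ := Finset.exists_mem_eq_sup' hFne d
  set S : ℝ := F.sup' hFne d with hS
  have hdnS : d n ≤ S := Finset.le_sup' d hnF
  have hSpos : 0 < S := lt_of_lt_of_le hdn hdnS
  have hub : ∀ k, d k ≤ S := by
    intro k
    by_cases hk : k ∈ F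
    · exact Finset.le_sup' d hk
    · have hkN : N ≤ k := by
        simp only [hF, Finset.mem_range, Nat.lt_succ_iff] at hk
        push_neg at hk
        exact le_trans (le_max_left N n) hk.le
      have := hN k hkN
      linarith
  have hprop : ∀ m : ℕ, d m = S → False := by
    intro m
    induction m with
    | zero => intro h; rw [hd0] at h; linarith
    | succ k ih =>
      intro h
      have h1 := hub k
      have h2 := hub (2*(k+1))
      have h3 := hdrec k
      have : d k = S := by nlinarith
      exact ih this
  exact hprop m hmS.symm

/-- Lemma `inteq1`: writing `M₀ = π([0,β))`, there is a constant `K > 1` such that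
`M₀·pⁿ ≤ π([nβ,(n+1)β)) ≤ M₀·K·pⁿ` for all integers `n ≥ 0`. -/
theorem stmt3 (α β : ℕ) (hα : 2 ≤ α) (hβ : 1 ≤ β) (p : ℝ) (hp0 : 0 < p) (hp : p ≤ 1 / 2)
    (π : Measure ℝ) [IsProbabilityMeasure π] (hsupp : π (Ici (0 : ℝ)) = 1)
    (hinv : ∀ A : Set ℝ, MeasurableSet A →
      π A = ENNReal.ofReal p * π ((fun y => y + (β : ℝ)) ⁻¹' A)
          + ENNReal.ofReal (1 - p) * π ((fun y => y / (α : ℝ)) ⁻¹' A)) :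
    ∃ K : ℝ, 1 < K ∧ ∀ n : ℕ,
      ENNReal.ofReal (p ^ n) * π (Ico (0 : ℝ) (β : ℝ)) ≤
          π (Ico ((n : ℝ) * β) (((n : ℝ) + 1) * β)) ∧
        π (Ico ((n : ℝ) * β) (((n : ℝ) + 1) * β)) ≤
          ENNReal.ofReal (K * p ^ n) * π (Ico (0 : ℝ) (β : ℝ)) := by
  have hp1 : p < 1 := by linarith
  have hαR : (2:ℝ) ≤ (α:ℕ) := by exact_mod_cast hα
  have hα0 : (0:ℝ) < (α:ℕ) := by linarith
  have hβR : (1:ℝ) ≤ (β:ℕ) := by exact_mod_cast hβ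
  have hβ0 : (0:ℝ) < (β:ℕ) := by linarith
  have hfin : ∀ A : Set ℝ, π A ≠ ⊤ := fun A => measure_ne_top π A
  -- preimage computations
  have pre_add_Ico : ∀ a b : ℝ, (fun y => y + (β:ℝ)) ⁻¹' Ico a b = Ico (a - β) (b - β) := by
    intro a b; ext x
    simp only [mem_preimage, mem_Ico]
    constructor <;> intro h <;> exact ⟨by linarith [h.1], by linarith [h.2]⟩
  have pre_add_Ici : ∀ a : ℝ, (fun y => y + (β:ℝ)) ⁻¹' Ici a = Ici (a - β) := by
    intro a; ext x
    simp only [mem_preimage, mem_Ici]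
    constructor <;> intro h <;> linarith
  have pre_div_Ico : ∀ a b : ℝ, (fun y => y / (α:ℝ)) ⁻¹' Ico a b = Ico (a * α) (b * α) := by
    intro a b; ext x
    simp only [mem_preimage, mem_Ico]
    rw [le_div_iff₀ hα0, div_lt_iff₀ hα0]
  have pre_div_Ici : ∀ a : ℝ, (fun y => y / (α:ℝ)) ⁻¹' Ici a = Ici (a * α) := by
    intro a; ext x
    simp only [mem_preimage, mem_Ici]
    rw [le_div_iff₀ hα0]
  -- M₀ > 0
  have hM0 : π (Ico (0:ℝ) (β:ℝ)) ≠ 0 := by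
    have hstep : ∀ k : ℕ, ENNReal.ofReal (1-p) * π (Ico 0 ((α:ℝ)^(k+1) * β)) ≤
        π (Ico 0 ((α:ℝ)^k * β)) := by
      intro k
      have h := hinv (Ico 0 ((α:ℝ)^k * β)) measurableSet_Ico
      rw [h, pre_div_Ico]
      have he : Ico (0 * (α:ℝ)) ((α:ℝ)^k * β * α) = Ico 0 ((α:ℝ)^(k+1) * β) := by
        congr 1 <;> ring
      rw [he]
      exact self_le_add_left _ _
    have hLinv : ∀ k : ℕ, ENNReal.ofReal ((1-p)^k) * π (Ico 0 ((α:ℝ)^k * β)) ≤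
        π (Ico (0:ℝ) (β:ℝ)) := by
      intro k
      induction k with
      | zero => simp
      | succ k ih =>
        calc ENNReal.ofReal ((1-p)^(k+1)) * π (Ico 0 ((α:ℝ)^(k+1) * β))
            = ENNReal.ofReal ((1-p)^k) * (ENNReal.ofReal (1-p) * π (Ico 0 ((α:ℝ)^(k+1) * β))) := by
              rw [← mul_assoc, ← ENNReal.ofReal_mul (pow_nonneg (by linarith) k)]
              ring_nf
          _ ≤ ENNReal.ofReal ((1-p)^k) * π (Ico 0 ((α:ℝ)^k * β)) :=
              mul_le_mul_right (hstep k) _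
          _ ≤ π (Ico (0:ℝ) (β:ℝ)) := ih
    intro h0
    have hLk : ∀ k : ℕ, π (Ico 0 ((α:ℝ)^k * β)) = 0 := by
      intro k
      have h := hLinv k
      rw [h0] at h
      have hne : ENNReal.ofReal ((1-p)^k) ≠ 0 := by
        simp only [ne_eq, ENNReal.ofReal_eq_zero, not_le]
        exact pow_pos (by linarith) k
      have := le_antisymm h zero_le
      exact (mul_eq_zero.mp this).resolve_left hne
    have hcov : Ici (0:ℝ) ⊆ ⋃ k : ℕ, Ico 0 ((α:ℝ)^k * β) := by
      intro x hx
      obtain ⟨k, hk⟩ := pow_unbounded_of_one_lt x (show (1:ℝ) < α by linarith)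
      refine mem_iUnion.2 ⟨k, hx, ?_⟩
      have : (α:ℝ)^k ≤ (α:ℝ)^k * β := le_mul_of_one_le_right (by positivity) hβR
      linarith
    have : π (Ici (0:ℝ)) = 0 := by
      refine le_antisymm ?_ zero_le
      calc π (Ici (0:ℝ)) ≤ π (⋃ k : ℕ, Ico 0 ((α:ℝ)^k * β)) := measure_mono hcov
        _ ≤ ∑' k : ℕ, π (Ico 0 ((α:ℝ)^k * β)) := measure_iUnion_le _
        _ = 0 := by simp [hLk]
    rw [hsupp] at this
    exact one_ne_zero this
  set m₀ : ℝ := (π (Ico (0:ℝ) (β:ℝ))).toReal with hm₀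
  have hm0pos : 0 < m₀ := ENNReal.toReal_pos hM0 (hfin _)
  have hm0le1 : m₀ ≤ 1 := by
    have := prob_le_one (μ := π) (s := Ico (0:ℝ) (β:ℝ))
    calc m₀ ≤ (1:ENNReal).toReal := ENNReal.toReal_mono ENNReal.one_ne_top this
      _ = 1 := by simp
  -- lower bound
  have hlow : ∀ n : ℕ, ENNReal.ofReal (p^n) * π (Ico (0:ℝ) (β:ℝ)) ≤
      π (Ico ((n:ℝ) * β) (((n:ℝ) + 1) * β)) := by
    intro n
    induction n with
    | zero => simp
    | succ n ih =>
      have h := hinv (Ico (((n:ℕ)+1:ℝ) * β) ((((n:ℕ)+1:ℝ)+1) * β)) measurableSet_Ico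
      rw [pre_add_Ico] at h
      have he : Ico (((n:ℕ)+1:ℝ) * β - β) ((((n:ℕ)+1:ℝ)+1) * β - β)
          = Ico ((n:ℝ) * β) (((n:ℝ)+1) * β) := by
        congr 1 <;> push_cast <;> ring
      rw [he] at h
      calc ENNReal.ofReal (p^(n+1)) * π (Ico (0:ℝ) (β:ℝ))
          = ENNReal.ofReal p * (ENNReal.ofReal (p^n) * π (Ico (0:ℝ) (β:ℝ))) := by
            rw [← mul_assoc, ← ENNReal.ofReal_mul hp0.le]
            ring_nf
        _ ≤ ENNReal.ofReal p * π (Ico ((n:ℝ) * β) (((n:ℝ)+1) * β)) := mul_le_mul_right ih _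
        _ ≤ π (Ico (((n:ℕ)+1:ℝ) * β) ((((n:ℕ)+1:ℝ)+1) * β)) := by
            rw [h]; exact le_add_right le_rfl
        _ = π (Ico (((n+1:ℕ):ℝ) * β) ((((n+1:ℕ):ℝ)+1) * β)) := by push_cast; ring_nf
  -- upper bound: tail estimate
  have hTrec : ∀ m : ℕ, ((π (Ici (((m+1:ℕ):ℝ) * β))).toReal : ℝ) ≤
      p * (π (Ici ((m:ℝ) * β))).toReal + (1-p) * (π (Ici (((2*(m+1):ℕ):ℝ) * β))).toReal := by
    intro m
    have h := hinv (Ici (((m:ℝ)+1) * β)) measurableSet_Ici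
    rw [pre_add_Ici, pre_div_Ici] at h
    have he1 : Ici (((m:ℝ)+1) * β - β) = Ici ((m:ℝ) * β) := by congr 1; ring
    rw [he1] at h
    have hmono : π (Ici ((((m:ℝ)+1) * β) * α)) ≤ π (Ici (((2*(m+1):ℕ):ℝ) * β)) := by
      refine measure_mono (Ici_subset_Ici.2 ?_)
      push_cast
      nlinarith [mul_nonneg (mul_nonneg (by positivity : (0:ℝ) ≤ (m:ℝ)+1) hβ0.le)
        (by linarith : (0:ℝ) ≤ (α:ℝ)-2)]
    have hcast : (((m+1:ℕ):ℝ) * β) = ((m:ℝ)+1) * β := by push_cast; ring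
    rw [hcast, h]
    rw [ENNReal.toReal_add (by finiteness) (by finiteness), ENNReal.toReal_mul,
      ENNReal.toReal_mul, ENNReal.toReal_ofReal hp0.le, ENNReal.toReal_ofReal (by linarith)]
    have := ENNReal.toReal_mono (hfin _) hmono
    nlinarith [this]
  have hTlim : Tendsto (fun n : ℕ => (π (Ici ((n:ℝ) * β))).toReal) atTop (nhds 0) := by
    have hinter : ⋂ n : ℕ, Ici ((n:ℝ) * β) = ∅ := by
      ext x
      simp only [mem_iInter, mem_Ici, mem_empty_iff_false, iff_false, not_forall, not_le]
      obtain ⟨k, hk⟩ := exists_nat_gt x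
      refine ⟨k, ?_⟩
      have : (k:ℝ) ≤ (k:ℝ) * β := le_mul_of_one_le_right (by positivity) hβR
      linarith
    have htend : Tendsto (fun n : ℕ => π (Ici ((n:ℝ) * β))) atTop (nhds (π (⋂ n : ℕ, Ici ((n:ℝ) * β)))) := by
      refine tendsto_measure_iInter_atTop (fun n => (measurableSet_Ici).nullMeasurableSet) ?_ ⟨0, hfin _⟩
      intro i j hij
      refine Ici_subset_Ici.2 ?_
      have : (i:ℝ) ≤ (j:ℝ) := by exact_mod_cast hij
      nlinarith
    rw [hinter] at htend
    simp only [measure_empty] at htend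
    have h := (ENNReal.tendsto_toReal (by simp : (0:ENNReal) ≠ ⊤)).comp htend
    exact h
  have hT : ∀ n : ℕ, (π (Ici ((n:ℝ) * β))).toReal ≤ p^n * (2 - p^n) := by
    refine maxprin p hp0 hp _ ?_ hTlim ?_
    · simp [hsupp]
    · intro m
      exact hTrec m
  -- conclusion
  refine ⟨2 / m₀, ?_, fun n => ⟨hlow n, ?_⟩⟩
  · rw [lt_div_iff₀ hm0pos]; linarith
  · have h1 : π (Ico ((n:ℝ) * β) (((n:ℝ)+1) * β)) ≤ π (Ici ((n:ℝ) * β)) :=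
      measure_mono Ico_subset_Ici_self
    have h2 : π (Ici ((n:ℝ) * β)) ≤ ENNReal.ofReal (2 / m₀ * p ^ n * m₀) := by
      rw [← ENNReal.ofReal_toReal (hfin (Ici ((n:ℝ) * β)))]
      refine ENNReal.ofReal_le_ofReal ?_
      have := hT n
      have hpn : 0 < p ^ n := pow_pos hp0 n
      have h3 : 2 / m₀ * p ^ n * m₀ = 2 * p ^ n := by field_simp
      have h4 : p ^ n * (2 - p ^ n) ≤ 2 * p ^ n := by nlinarith [pow_nonneg hp0.le n]
      linarith
    have h5 : ENNReal.ofReal (2 / m₀ * p ^ n * m₀)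
        = ENNReal.ofReal (2 / m₀ * p ^ n) * π (Ico (0:ℝ) (β:ℝ)) := by
      rw [ENNReal.ofReal_mul (by positivity), ENNReal.ofReal_toReal (hfin _)]
    calc π (Ico ((n:ℝ) * β) (((n:ℝ)+1) * β)) ≤ π (Ici ((n:ℝ) * β)) := h1
      _ ≤ ENNReal.ofReal (2 / m₀ * p ^ n * m₀) := h2
      _ = ENNReal.ofReal (2 / m₀ * p ^ n) * π (Ico (0:ℝ) (β:ℝ)) := h5
end

section
/- For all integers n ≥ 0 and k ≥ 1, π([nβ/α^k, (n+1)β/α^k)) = (1−p)·Σ_{j=0}^{⌊n/α^k⌋} p^j · π([nβ/α^{k−1} − jαβ, (n+1)β/α^{k−1} − jαβ)). -/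
open MeasureTheory Set

lemma stmt4_div_preimage_Ico (a u v : ℝ) (ha : 0 < a) :
    (fun y => y / a) ⁻¹' Ico u v = Ico (u * a) (v * a) := by
  ext y
  simp only [mem_preimage, mem_Ico]
  rw [le_div_iff₀ ha, div_lt_iff₀ ha]

/-- Lemma `intexp`: for all integers `n ≥ 0` and `k ≥ 1`,
`π([nβ/α^k, (n+1)β/α^k)) = (1-p)·Σ_{j=0}^{⌊n/α^k⌋} p^j·π([nβ/α^{k-1} - jαβ, (n+1)β/α^{k-1} - jαβ))`. -/
theorem stmt4 (α β : ℕ) (hα : 2 ≤ α) (hβ : 1 ≤ β) (p : ℝ) (hp0 : 0 < p) (hp1 : p < 1)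
    (π : Measure ℝ) [IsProbabilityMeasure π] (hsupp : π (Ici (0 : ℝ)) = 1)
    (hinv : ∀ A : Set ℝ, MeasurableSet A →
      π A = ENNReal.ofReal p * π ((fun y => y + (β : ℝ)) ⁻¹' A)
          + ENNReal.ofReal (1 - p) * π ((fun y => y / (α : ℝ)) ⁻¹' A)) :
    ∀ n k : ℕ, 1 ≤ k →
      π (Ico ((n : ℝ) * β / (α : ℝ) ^ k) (((n : ℝ) + 1) * β / (α : ℝ) ^ k)) =
        ENNReal.ofReal (1 - p) *
          ∑ j ∈ Finset.range (n / α ^ k + 1),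
            ENNReal.ofReal (p ^ j) *
              π (Ico ((n : ℝ) * β / (α : ℝ) ^ (k - 1) - (j : ℝ) * α * β)
                     (((n : ℝ) + 1) * β / (α : ℝ) ^ (k - 1) - (j : ℝ) * α * β)) := by
  intro n k hk
  induction n using Nat.strong_induction_on with
  | _ n IH =>
  have hα0 : (0:ℝ) < (α:ℝ) := by
    have : 0 < α := by omega
    exact_mod_cast this
  have hαk0 : (0:ℝ) < (α:ℝ)^k := pow_pos hα0 k
  have hαk0' : ((α:ℝ)^k) ≠ 0 := ne_of_gt hαk0
  have hαk1' : ((α:ℝ)^(k-1)) ≠ 0 := pow_ne_zero _ (ne_of_gt hα0)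
  have hβ0 : (0:ℝ) < (β:ℝ) := by exact_mod_cast hβ
  have hpow : (α:ℝ)^k = (α:ℝ)^(k-1) * α := by
    have hkk : k - 1 + 1 = k := Nat.succ_pred_eq_of_pos hk
    rw [← pow_succ, hkk]
  have hIio : π (Iio (0:ℝ)) = 0 := by
    have hcompl := measure_compl (measurableSet_Ici (a := (0:ℝ))) (measure_ne_top π _)
    rw [compl_Ici] at hcompl
    simp [hsupp, measure_univ] at hcompl
    exact hcompl
  have hd : ∀ x:ℝ, x / (α:ℝ)^k * α = x / (α:ℝ)^(k-1) := by
    intro x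
    rw [hpow, ← div_div, div_mul_cancel₀ _ (ne_of_gt hα0)]
  have key := hinv (Ico ((n : ℝ) * β / (α:ℝ)^k) (((n:ℝ)+1) * β / (α:ℝ)^k)) measurableSet_Ico
  rw [Set.preimage_add_const_Ico, stmt4_div_preimage_Ico _ _ _ hα0, hd, hd] at key
  have hαknat : 0 < α ^ k := pow_pos (by omega) k
  rcases lt_or_ge n (α^k) with hcase | hcase
  · -- n < α^k : shifted interval has measure zero
    have hzero : π (Ico ((n:ℝ)*β/(α:ℝ)^k - β) (((n:ℝ)+1)*β/(α:ℝ)^k - β)) = 0 := by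
      refine le_antisymm ?_ zero_le
      rw [← hIio]
      apply measure_mono
      intro x hx
      have hle : ((n:ℝ)+1)*β/(α:ℝ)^k - β ≤ 0 := by
        rw [sub_nonpos, div_le_iff₀ hαk0]
        have hcast : ((n:ℝ)+1) ≤ (α:ℝ)^k := by
          have : (n:ℕ) + 1 ≤ α ^ k := hcase
          exact_mod_cast this
        nlinarith
      exact lt_of_lt_of_le hx.2 hle
    rw [Nat.div_eq_of_lt hcase, key, hzero, mul_zero, zero_add]
    simp
  · -- α^k ≤ n : use the induction hypothesis on m = n - α^k
    set m := n - α^k with hm_def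
    have hmn : m < n := Nat.sub_lt (lt_of_lt_of_le hαknat hcase) hαknat
    have hmR : (m:ℝ) = (n:ℝ) - (α:ℝ)^k := by
      rw [hm_def, Nat.cast_sub hcase, Nat.cast_pow]
    have e1 : (n:ℝ)*β/(α:ℝ)^k - β = (m:ℝ)*β/(α:ℝ)^k := by
      rw [hmR]; field_simp
    have e2 : ((n:ℝ)+1)*β/(α:ℝ)^k - β = ((m:ℝ)+1)*β/(α:ℝ)^k := by
      rw [hmR]; field_simp; ring
    rw [e1, e2, IH m hmn] at key
    have hdiv : n / α^k = m / α^k + 1 := by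
      rw [hm_def]
      exact Nat.div_eq_sub_div hαknat hcase
    have eterm : ∀ j:ℕ, ∀ x:ℝ, x*β/(α:ℝ)^(k-1) - ((j:ℝ)+1)*α*β
        = (x - (α:ℝ)^k)*β/(α:ℝ)^(k-1) - (j:ℝ)*α*β := by
      intro j x
      rw [hpow]; field_simp; ring
    rw [hdiv, Finset.sum_range_succ']
    have hsum_eq : ∀ i ∈ Finset.range (m / α^k + 1),
        ENNReal.ofReal (p ^ (i+1)) *
          π (Ico ((n : ℝ) * β / (α : ℝ) ^ (k - 1) - ((i:ℕ)+1 : ℕ) * α * β)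
                 (((n : ℝ) + 1) * β / (α : ℝ) ^ (k - 1) - ((i:ℕ)+1 : ℕ) * α * β))
        = ENNReal.ofReal p * (ENNReal.ofReal (p ^ i) *
          π (Ico ((m : ℝ) * β / (α : ℝ) ^ (k - 1) - (i : ℝ) * α * β)
                 (((m : ℝ) + 1) * β / (α : ℝ) ^ (k - 1) - (i : ℝ) * α * β))) := by
      intro i _
      have c1 : ((i+1 : ℕ) : ℝ) = (i:ℝ) + 1 := by push_cast; ring
      have i1 : (n : ℝ) * β / (α : ℝ) ^ (k - 1) - ((i+1 : ℕ):ℝ) * α * β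
          = (m : ℝ) * β / (α : ℝ) ^ (k - 1) - (i : ℝ) * α * β := by
        rw [c1, eterm i (n:ℝ), hmR]
      have i2 : ((n : ℝ) + 1) * β / (α : ℝ) ^ (k - 1) - ((i+1 : ℕ):ℝ) * α * β
          = ((m : ℝ) + 1) * β / (α : ℝ) ^ (k - 1) - (i : ℝ) * α * β := by
        rw [c1, eterm i ((n:ℝ)+1), hmR]; ring_nf
      rw [i1, i2, pow_succ', ENNReal.ofReal_mul hp0.le, mul_assoc]
    rw [Finset.sum_congr rfl hsum_eq, ← Finset.mul_sum, key]
    simp only [Nat.cast_zero, pow_zero, ENNReal.ofReal_one, one_mul, zero_mul, sub_zero]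
    ring
end

section
/- Let α ≥ 2, t ≥ 1, j ≥ 0 and n be integers with n ≥ j·α^t. Then g(n − j·α^t, t−1) = g(n, t−1) − j·α. -/
/-- `g(n,k) = n·α + (1-α)·Σ_{i=0}^{k} ⌊n/α^i⌋`. -/
def g (α n k : ℕ) : ℤ :=
  (n : ℤ) * α + (1 - (α : ℤ)) * ∑ i ∈ Finset.range (k + 1), ((n / α ^ i : ℕ) : ℤ)

/-- If `α ≥ 2`, `t ≥ 1`, `j ≥ 0` and `n ≥ j·α^t`, then
`g(n - j·α^t, t-1) = g(n, t-1) - j·α`. -/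
theorem stmt7 (α t j n : ℕ) (hα : 2 ≤ α) (ht : 1 ≤ t) (hn : j * α ^ t ≤ n) :
    g α (n - j * α ^ t) (t - 1) = g α n (t - 1) - (j : ℤ) * α := by
  obtain ⟨k, rfl⟩ : ∃ k, t = k + 1 := ⟨t - 1, (Nat.succ_pred_eq_of_pos ht).symm⟩
  have hαpos : 0 < α := by omega
  have hterm : ∀ i ∈ Finset.range (k + 1),
      (((n - j * α ^ (k + 1)) / α ^ i : ℕ) : ℤ)
        = ((n / α ^ i : ℕ) : ℤ) - (j : ℤ) * (α : ℤ) ^ (k + 1 - i) := by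
    intro i hi
    simp only [Finset.mem_range] at hi
    have hle : i ≤ k + 1 := by omega
    have hsplit : j * α ^ (k + 1) = α ^ i * (j * α ^ (k + 1 - i)) := by
      rw [← Nat.pow_sub_mul_pow α hle]; ring
    have hnat : (n - j * α ^ (k + 1)) / α ^ i = n / α ^ i - j * α ^ (k + 1 - i) := by
      rw [hsplit, Nat.sub_mul_div _ _ _]
    have hle2 : j * α ^ (k + 1 - i) ≤ n / α ^ i := by
      rw [Nat.le_div_iff_mul_le (pow_pos hαpos i)]
      calc j * α ^ (k + 1 - i) * α ^ i = j * α ^ (k + 1) := by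
            rw [mul_assoc, ← pow_add, Nat.sub_add_cancel hle]
        _ ≤ n := hn
    rw [hnat]
    push_cast [hle2]
    ring
  simp only [Nat.add_sub_cancel] at *
  rw [g, g, Finset.sum_congr rfl hterm, Finset.sum_sub_distrib]
  have hgeom : ∑ i ∈ Finset.range (k + 1), (j : ℤ) * (α : ℤ) ^ (k + 1 - i)
      = (j : ℤ) * (α : ℤ) * ∑ i ∈ Finset.range (k + 1), (α : ℤ) ^ i := by
    rw [← Finset.sum_range_reflect (fun i => (j : ℤ) * (α : ℤ) ^ (k + 1 - i)) (k + 1),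
      Finset.mul_sum]
    refine Finset.sum_congr rfl fun i hi => ?_
    simp only [Finset.mem_range] at hi
    have : k + 1 - (k + 1 - 1 - i) = i + 1 := by omega
    rw [this, pow_succ]
    ring
  have hcastsub : ((n - j * α ^ (k + 1) : ℕ) : ℤ) = (n : ℤ) - (j : ℤ) * (α : ℤ) ^ (k + 1) := by
    push_cast [hn]; ring
  rw [hgeom, hcastsub]
  have hg := geom_sum_mul (α : ℤ) (k + 1)
  linear_combination (j : ℤ) * (α : ℤ) * hg
end

section
/- The upper Hausdorff dimension of π satisfies dim_H^* π ≤ (Σ_{i=0}^{α−1} ξ_i·log ξ_i)/log(α^{−1}), with the convention 0·log 0 = 0. (First part of the main theorem.) -/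
open MeasureTheory Set Filter

/-- The lower local dimension `liminf_{r→0+} log π(B(x,r))/log r`. -/
noncomputable def lowerLocalDim (π : Measure ℝ) (x : ℝ) : ℝ :=
  liminf (fun r : ℝ => Real.log (π (Metric.ball x r)).toReal / Real.log r)
    (nhdsWithin 0 (Ioi 0))

/-- `ξ_k = Σ_{m=0}^∞ π([mα+k, mα+k+1))`, as a real number. -/
noncomputable def xi (α : ℕ) (π : Measure ℝ) (k : ℕ) : ℝ :=
  (∑' m : ℕ, π (Ico ((m : ℝ) * α + k) ((m : ℝ) * α + k + 1))).toReal

namespace Stmt11Aux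

open scoped ENNReal

/-- The `i`-th digit of `x` in base `α` (for `i ≥ 1`; `dg α 0 x` is `⌊x⌋ mod α`). -/
noncomputable def dg (α : ℕ) (i : ℕ) (x : ℝ) : ℕ := (⌊(α : ℝ) ^ i * x⌋ % (α : ℤ)).toNat

/-- The invariance property. -/
def Hinv (α β : ℕ) (p : ℝ) (μ : Measure ℝ) : Prop :=
  ∀ A : Set ℝ, MeasurableSet A →
    μ A = ENNReal.ofReal p * μ ((fun y => y + (β : ℝ)) ⁻¹' A)
        + ENNReal.ofReal (1 - p) * μ ((fun y => y / (α : ℝ)) ⁻¹' A)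

/-- `θ_j = μ {x | ⌊x⌋ % α = j}`. -/
noncomputable def th (α : ℕ) (μ : Measure ℝ) (j : ℕ) : ℝ≥0∞ := μ {x | dg α 0 x = j}

/-- `Θ_z = μ {x | ⌊x⌋ = z}`. -/
noncomputable def Th (μ : Measure ℝ) (z : ℤ) : ℝ≥0∞ := μ {x | ⌊x⌋ = z}

/-- entropy `H = -∑_k θ_k log θ_k`. -/
noncomputable def ent (α : ℕ) (μ : Measure ℝ) : ℝ :=
  ∑ k ∈ Finset.range α, (th α μ k).toReal * (- Real.log (th α μ k).toReal)

variable {α β : ℕ} {p : ℝ}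

lemma dg_cast (hα : 2 ≤ α) (i : ℕ) (x : ℝ) :
    (dg α i x : ℤ) = ⌊(α : ℝ) ^ i * x⌋ % (α : ℤ) := by
  have : (0:ℤ) < (α:ℤ) := by exact_mod_cast Nat.lt_of_lt_of_le Nat.zero_lt_two hα
  exact Int.toNat_of_nonneg (Int.emod_nonneg _ this.ne')

lemma dg_lt (hα : 2 ≤ α) (i : ℕ) (x : ℝ) : dg α i x < α := by
  have hpos : (0:ℤ) < (α:ℤ) := by exact_mod_cast Nat.lt_of_lt_of_le Nat.zero_lt_two hα
  have h := Int.emod_lt_of_pos (⌊(α : ℝ) ^ i * x⌋) hpos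
  have h2 := dg_cast hα i x
  omega

lemma measurable_dg (i : ℕ) : Measurable (dg α i) := by
  have h1 : Measurable fun x : ℝ => ⌊(α : ℝ) ^ i * x⌋ :=
    Int.measurable_floor.comp (measurable_const.mul measurable_id)
  exact (Measurable.of_discrete (f := fun z : ℤ => (z % (α:ℤ)).toNat)).comp h1

lemma dg_add_nat (hα : 2 ≤ α) {i : ℕ} (hi : 1 ≤ i) (x : ℝ) :
    dg α i (x + (β : ℝ)) = dg α i x := by
  obtain ⟨j, rfl⟩ := Nat.exists_eq_add_of_le hi
  unfold dg
  have h1 : (α:ℝ)^(1+j) * (x + (β:ℝ))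
      = (α:ℝ)^(1+j) * x + (((α:ℤ) * ((α:ℤ)^j * (β:ℤ)) : ℤ) : ℝ) := by
    push_cast; ring
  rw [h1, Int.floor_add_intCast, Int.add_mul_emod_self_left]

lemma dg_div (hα : 2 ≤ α) (i : ℕ) (x : ℝ) :
    dg α (i + 1) (x / (α : ℝ)) = dg α i x := by
  have hpos : (0:ℝ) < (α:ℝ) := by exact_mod_cast Nat.lt_of_lt_of_le Nat.zero_lt_two hα
  unfold dg
  have h1 : (α:ℝ)^(i+1) * (x / (α:ℝ)) = (α:ℝ)^i * x := by
    field_simp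
    ring
  rw [h1]

lemma floor_succ (hα : 2 ≤ α) (n : ℕ) (y : ℝ) :
    ⌊(α : ℝ) ^ (n + 1) * y⌋ = (α : ℤ) * ⌊(α : ℝ) ^ n * y⌋ + (dg α (n + 1) y : ℤ) := by
  have hpos : (0:ℝ) < (α:ℝ) := by exact_mod_cast Nat.lt_of_lt_of_le Nat.zero_lt_two hα
  set z := (α:ℝ)^n * y with hz
  have hzz : (α:ℝ)^(n+1) * y = (α:ℝ) * z := by rw [hz]; ring
  set a := ⌊z⌋ with ha
  set b := ⌊(α:ℝ) * z⌋ with hb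
  have h1 : (α:ℤ) * a ≤ b := by
    rw [hb]
    apply Int.le_floor.mpr
    push_cast
    exact mul_le_mul_of_nonneg_left (Int.floor_le z) hpos.le
  have h2 : b < (α:ℤ) * a + α := by
    rw [hb]
    apply Int.floor_lt.mpr
    push_cast
    have := Int.lt_floor_add_one z
    nlinarith
  have hr : b % (α:ℤ) = b - (α:ℤ) * a := by
    conv_lhs => rw [show b = (b - (α:ℤ)*a) + (α:ℤ)*a by ring]
    rw [Int.add_mul_emod_self_left]
    exact Int.emod_eq_of_lt (by omega) (by omega)
  have hcast : (dg α (n+1) y : ℤ) = b % (α:ℤ) := by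
    rw [dg_cast hα, hzz]
  rw [hzz, ← hb, hcast, hr]
  ring

lemma floor_eq_of_data (hα : 2 ≤ α) {n : ℕ} {x y : ℝ} (h0 : ⌊y⌋ = ⌊x⌋)
    (hd : ∀ i < n, dg α (i + 1) y = dg α (i + 1) x) :
    ⌊(α : ℝ) ^ n * y⌋ = ⌊(α : ℝ) ^ n * x⌋ := by
  induction n with
  | zero => simpa using h0
  | succ m ih =>
    have ihm := ih (fun i hi => hd i (Nat.lt_succ_of_lt hi))
    rw [floor_succ hα, floor_succ hα, ihm, hd m (Nat.lt_succ_self m)]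

lemma dist_lt_of_data (hα : 2 ≤ α) {n : ℕ} {x y : ℝ} (h0 : ⌊y⌋ = ⌊x⌋)
    (hd : ∀ i < n, dg α (i + 1) y = dg α (i + 1) x) :
    dist y x < (((α : ℝ) ^ n)⁻¹) := by
  have hpos : (0:ℝ) < (α:ℝ) := by exact_mod_cast Nat.lt_of_lt_of_le Nat.zero_lt_two hα
  have hpn : (0:ℝ) < (α:ℝ)^n := by positivity
  have hM := floor_eq_of_data hα h0 hd
  have h1 : (α:ℝ)^n * y - (α:ℝ)^n * x < 1 := by
    have l1 := Int.floor_le ((α:ℝ)^n * x)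
    have l2 := Int.lt_floor_add_one ((α:ℝ)^n * y)
    rw [hM] at l2
    linarith
  have h2 : (α:ℝ)^n * x - (α:ℝ)^n * y < 1 := by
    have l1 := Int.floor_le ((α:ℝ)^n * y)
    have l2 := Int.lt_floor_add_one ((α:ℝ)^n * x)
    rw [hM] at l1
    linarith
  rw [Real.dist_eq, abs_sub_lt_iff, inv_eq_one_div, lt_div_iff₀ hpn, lt_div_iff₀ hpn]
  constructor <;> nlinarith

/-- All digit marginals agree with the level-0 one. -/
lemma marginal (hα : 2 ≤ α) (hβ : 1 ≤ β) (hp0 : 0 < p) (hp1 : p < 1)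
    (μ : Measure ℝ) [IsProbabilityMeasure μ] (hinv : Hinv α β p μ) (i j : ℕ) :
    μ {x | dg α i x = j} = th α μ j := by
  induction i with
  | zero => rfl
  | succ m ih =>
    have hAm : MeasurableSet {x : ℝ | dg α (m+1) x = j} :=
      (measurable_dg (m+1)) (measurableSet_singleton j)
    have h1 : (fun y : ℝ => y + (β:ℝ)) ⁻¹' {x | dg α (m+1) x = j} = {x | dg α (m+1) x = j} := by
      ext y
      simp only [mem_preimage, mem_setOf_eq]
      rw [dg_add_nat hα (Nat.succ_le_succ (Nat.zero_le m))]
    have h2 : (fun y : ℝ => y / (α:ℝ)) ⁻¹' {x | dg α (m+1) x = j} = {x | dg α m x = j} := by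
      ext y
      simp only [mem_preimage, mem_setOf_eq]
      rw [dg_div hα]
    have heq := hinv _ hAm
    rw [h1, h2, ih] at heq
    -- from a = p a + (1-p) b conclude a = b
    set a := μ {x | dg α (m+1) x = j} with ha
    set b := th α μ j with hb
    have hafin : a ≠ ∞ := (measure_lt_top μ _).ne
    have hbfin : b ≠ ∞ := (measure_lt_top μ _).ne
    have hareal : a.toReal = p * a.toReal + (1-p) * b.toReal := by
      have := congrArg ENNReal.toReal heq
      rwa [ENNReal.toReal_add (by finiteness) (by finiteness), ENNReal.toReal_mul,
        ENNReal.toReal_mul, ENNReal.toReal_ofReal hp0.le,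
        ENNReal.toReal_ofReal (by linarith)] at this
    have : a.toReal = b.toReal := by
      have h1p : (1:ℝ) - p ≠ 0 := by linarith
      field_simp at hareal
      nlinarith
    exact (ENNReal.toReal_eq_toReal_iff' hafin hbfin).mp this

lemma th_tsum (hα : 2 ≤ α) (μ : Measure ℝ) [IsProbabilityMeasure μ] :
    ∑' j : ℕ, th α μ j = 1 := by
  have hcover : ⋃ j : ℕ, {x : ℝ | dg α 0 x = j} = univ := by
    ext x; simp
  simp only [th]
  have hdis : Pairwise (Function.onFun Disjoint fun j : ℕ => {x : ℝ | dg α 0 x = j}) := by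
    intro i j hij
    simp only [Function.onFun, Set.disjoint_left]
    rintro x hx1 hx2
    exact hij (hx1.symm.trans hx2)
  rw [← measure_iUnion hdis (fun j => (measurable_dg 0) (measurableSet_singleton j))]
  rw [hcover, measure_univ]

lemma Th_tsum (μ : Measure ℝ) [IsProbabilityMeasure μ] :
    ∑' z : ℤ, Th μ z = 1 := by
  have hcover : ⋃ z : ℤ, {x : ℝ | ⌊x⌋ = z} = univ := by
    ext x; simp
  simp only [Th]
  have hdis : Pairwise (Function.onFun Disjoint fun z : ℤ => {x : ℝ | ⌊x⌋ = z}) := by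
    intro i j hij
    simp only [Function.onFun, Set.disjoint_left]
    rintro x hx1 hx2
    exact hij (hx1.symm.trans hx2)
  rw [← measure_iUnion hdis (fun z => Int.measurable_floor (measurableSet_singleton z))]
  rw [hcover, measure_univ]

lemma th_le_one (μ : Measure ℝ) [IsProbabilityMeasure μ] (j : ℕ) : th α μ j ≤ 1 :=
  prob_le_one

lemma th_zero_of_ge (hα : 2 ≤ α) (μ : Measure ℝ) {j : ℕ} (hj : α ≤ j) : th α μ j = 0 := by
  have : {x : ℝ | dg α 0 x = j} = ∅ := by
    ext x; simp only [mem_setOf_eq, mem_empty_iff_false, iff_false]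
    intro h; exact absurd hj (by rw [← h]; exact (dg_lt hα 0 x).not_ge)
  simp [th, this]

lemma bdd_integrable (μ : Measure ℝ) [IsFiniteMeasure μ] {f : ℝ → ℝ} (hf : Measurable f)
    {C : ℝ} (hC : ∀ x, |f x| ≤ C) : Integrable f μ :=
  (integrable_const C).mono' hf.aestronglyMeasurable (Eventually.of_forall (by simpa using hC))

lemma op_integral (hα : 2 ≤ α) (hp0 : 0 < p) (hp1 : p < 1)
    (μ : Measure ℝ) [IsProbabilityMeasure μ] (hinv : Hinv α β p μ)
    {f : ℝ → ℝ} (hf : Measurable f) {C : ℝ} (hC : ∀ x, |f x| ≤ C) :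
    ∫ x, f x ∂μ = p * ∫ x, f (x + (β:ℝ)) ∂μ + (1-p) * ∫ x, f (x / (α:ℝ)) ∂μ := by
  have hm1 : Measurable (fun y : ℝ => y + (β:ℝ)) := measurable_id.add_const _
  have hm2 : Measurable (fun y : ℝ => y / (α:ℝ)) := measurable_id.div_const _
  have hμeq : μ = ENNReal.ofReal p • μ.map (fun y : ℝ => y + (β:ℝ))
      + ENNReal.ofReal (1-p) • μ.map (fun y : ℝ => y / (α:ℝ)) := by
    ext A hA
    rw [hinv A hA]
    simp [Measure.map_apply hm1 hA, Measure.map_apply hm2 hA]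
  have i1 : IsProbabilityMeasure (μ.map (fun y : ℝ => y + (β:ℝ))) :=
    Measure.isProbabilityMeasure_map hm1.aemeasurable
  have i2 : IsProbabilityMeasure (μ.map (fun y : ℝ => y / (α:ℝ))) :=
    Measure.isProbabilityMeasure_map hm2.aemeasurable
  have hint1 : Integrable f (μ.map (fun y : ℝ => y + (β:ℝ))) := bdd_integrable _ hf hC
  have hint2 : Integrable f (μ.map (fun y : ℝ => y / (α:ℝ))) := bdd_integrable _ hf hC
  conv_lhs => rw [hμeq]
  rw [integral_add_measure (hint1.smul_measure ENNReal.ofReal_ne_top)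
    (hint2.smul_measure ENNReal.ofReal_ne_top),
    integral_smul_measure, integral_smul_measure,
    integral_map hm1.aemeasurable hf.aestronglyMeasurable,
    integral_map hm2.aemeasurable hf.aestronglyMeasurable,
    ENNReal.toReal_ofReal hp0.le, ENNReal.toReal_ofReal (by linarith), smul_eq_mul, smul_eq_mul]

/-- iterates of the transfer operator -/
noncomputable def itg (α β : ℕ) (p : ℝ) (f : ℝ → ℝ) : ℕ → ℝ → ℝ
  | 0 => f
  | n+1 => fun x => p * itg α β p f n (x + (β:ℝ)) + (1-p) * itg α β p f n (x / (α:ℝ))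

lemma itg_meas {f : ℝ → ℝ} (hf : Measurable f) (n : ℕ) : Measurable (itg α β p f n) := by
  induction n with
  | zero => exact hf
  | succ m ih =>
    exact ((ih.comp (measurable_id.add_const _)).const_mul p).add
      ((ih.comp (measurable_id.div_const _)).const_mul (1-p))

lemma itg_bound (hp0 : 0 < p) (hp1 : p < 1) {f : ℝ → ℝ} {C : ℝ} (hC : ∀ x, |f x| ≤ C)
    (n : ℕ) : ∀ x, |itg α β p f n x| ≤ C := by
  induction n with
  | zero => exact hC
  | succ m ih =>
    intro x
    calc |p * itg α β p f m (x + (β:ℝ)) + (1-p) * itg α β p f m (x / (α:ℝ))|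
        ≤ |p * itg α β p f m (x + (β:ℝ))| + |(1-p) * itg α β p f m (x / (α:ℝ))| := abs_add_le _ _
      _ = p * |itg α β p f m (x + (β:ℝ))| + (1-p) * |itg α β p f m (x / (α:ℝ))| := by
          rw [abs_mul, abs_mul, abs_of_nonneg hp0.le, abs_of_nonneg (show (0:ℝ) ≤ 1 - p by linarith)]
      _ ≤ p * C + (1-p) * C := by
          have h1 := ih (x + (β:ℝ)); have h2 := ih (x / (α:ℝ))
          have : (0:ℝ) ≤ 1 - p := by linarith
          nlinarith
      _ = C := by ring

lemma itg_lip (hα : 2 ≤ α) (hp0 : 0 < p) (hp1 : p < 1) {f : ℝ → ℝ} {K : ℝ} (hK0 : 0 ≤ K)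
    (hK : ∀ x y, |f x - f y| ≤ K * |x - y|) (n : ℕ) :
    ∀ x y, |itg α β p f n x - itg α β p f n y|
      ≤ K * (p + (1-p)/α)^n * |x - y| := by
  have hαpos : (0:ℝ) < (α:ℝ) := by exact_mod_cast Nat.lt_of_lt_of_le Nat.zero_lt_two hα
  induction n with
  | zero => simpa [itg] using hK
  | succ m ih =>
    intro x y
    have h1 := ih (x + (β:ℝ)) (y + (β:ℝ))
    have h2 := ih (x / (α:ℝ)) (y / (α:ℝ))
    have e1 : (x + (β:ℝ)) - (y + (β:ℝ)) = x - y := by ring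
    have e2 : |x / (α:ℝ) - y / (α:ℝ)| = |x - y| / (α:ℝ) := by
      rw [div_sub_div_same, abs_div, abs_of_pos hαpos]
    rw [e1] at h1
    rw [e2] at h2
    have hl0 : (0:ℝ) ≤ (p + (1-p)/α)^m := by
      apply pow_nonneg
      have : (0:ℝ) ≤ (1-p)/α := div_nonneg (by linarith) hαpos.le
      linarith
    calc |(p * itg α β p f m (x + (β:ℝ)) + (1-p) * itg α β p f m (x / (α:ℝ)))
          - (p * itg α β p f m (y + (β:ℝ)) + (1-p) * itg α β p f m (y / (α:ℝ)))|
        = |p * (itg α β p f m (x + (β:ℝ)) - itg α β p f m (y + (β:ℝ)))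
          + (1-p) * (itg α β p f m (x / (α:ℝ)) - itg α β p f m (y / (α:ℝ)))| := by ring_nf
      _ ≤ |p * (itg α β p f m (x + (β:ℝ)) - itg α β p f m (y + (β:ℝ)))|
          + |(1-p) * (itg α β p f m (x / (α:ℝ)) - itg α β p f m (y / (α:ℝ)))| := abs_add_le _ _
      _ = p * |itg α β p f m (x + (β:ℝ)) - itg α β p f m (y + (β:ℝ))|
          + (1-p) * |itg α β p f m (x / (α:ℝ)) - itg α β p f m (y / (α:ℝ))| := by
          rw [abs_mul, abs_mul, abs_of_nonneg hp0.le, abs_of_nonneg (show (0:ℝ) ≤ 1 - p by linarith)]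
      _ ≤ p * (K * (p + (1-p)/α)^m * |x - y|) + (1-p) * (K * (p + (1-p)/α)^m * (|x - y| / α)) := by
          have hp1' : (0:ℝ) ≤ 1 - p := by linarith
          have := mul_le_mul_of_nonneg_left h1 hp0.le
          have := mul_le_mul_of_nonneg_left h2 hp1'
          linarith
      _ = K * (p + (1-p)/α)^(m+1) * |x - y| := by
          ring

lemma itg_integral (hα : 2 ≤ α) (hp0 : 0 < p) (hp1 : p < 1)
    (μ : Measure ℝ) [IsProbabilityMeasure μ] (hinv : Hinv α β p μ)
    {f : ℝ → ℝ} (hf : Measurable f) {C : ℝ} (hC : ∀ x, |f x| ≤ C) (n : ℕ) :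
    ∫ x, itg α β p f n x ∂μ = ∫ x, f x ∂μ := by
  induction n with
  | zero => rfl
  | succ m ih =>
    have hg : Measurable (itg α β p f m) := itg_meas hf m
    have hgC : ∀ x, |itg α β p f m x| ≤ C := itg_bound hp0 hp1 hC m
    have hop := op_integral hα hp0 hp1 μ hinv hg hgC
    have hi1 : Integrable (fun x => itg α β p f m (x + (β:ℝ))) μ :=
      bdd_integrable _ (hg.comp (measurable_id.add_const _)) (fun x => hgC _)
    have hi2 : Integrable (fun x => itg α β p f m (x / (α:ℝ))) μ :=
      bdd_integrable _ (hg.comp (measurable_id.div_const _)) (fun x => hgC _)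
    calc ∫ x, itg α β p f (m+1) x ∂μ
        = ∫ x, (p * itg α β p f m (x + (β:ℝ)) + (1-p) * itg α β p f m (x / (α:ℝ))) ∂μ := rfl
      _ = p * ∫ x, itg α β p f m (x + (β:ℝ)) ∂μ
          + (1-p) * ∫ x, itg α β p f m (x / (α:ℝ)) ∂μ := by
          rw [integral_add (hi1.const_mul p) (hi2.const_mul (1-p)),
            integral_const_mul, integral_const_mul]
      _ = ∫ x, itg α β p f m x ∂μ := hop.symm
      _ = ∫ x, f x ∂μ := ih

lemma tail_small (μ : Measure ℝ) [IsProbabilityMeasure μ] {δ : ℝ} (hδ : 0 < δ) :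
    ∃ R : ℕ, (μ {x : ℝ | (R:ℝ) < |x|}).toReal ≤ δ := by
  have hmeas : ∀ R : ℕ, MeasurableSet {x : ℝ | (R:ℝ) < |x|} :=
    fun R => measurableSet_lt measurable_const measurable_id.abs
  have hanti : Antitone (fun R : ℕ => {x : ℝ | (R:ℝ) < |x|}) := by
    intro m n hmn x hx
    simp only [mem_setOf_eq] at hx ⊢
    have : (m:ℝ) ≤ (n:ℝ) := by exact_mod_cast hmn
    linarith
  have hempty : ⋂ R : ℕ, {x : ℝ | (R:ℝ) < |x|} = ∅ := by
    ext x
    simp only [mem_iInter, mem_setOf_eq, mem_empty_iff_false, iff_false, not_forall, not_lt]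
    obtain ⟨n, hn⟩ := exists_nat_gt |x|
    exact ⟨n, hn.le⟩
  have htendsto := tendsto_measure_iInter_atTop
    (fun R => (hmeas R).nullMeasurableSet) hanti ⟨0, (measure_lt_top μ _).ne⟩
  rw [hempty, measure_empty] at htendsto
  have hlt : (0:ℝ≥0∞) < ENNReal.ofReal δ := by simpa using hδ
  obtain ⟨R, hR⟩ := (htendsto.eventually_lt_const hlt).exists
  refine ⟨R, ?_⟩
  calc (μ {x : ℝ | (R:ℝ) < |x|}).toReal ≤ (ENNReal.ofReal δ).toReal :=
        ENNReal.toReal_mono ENNReal.ofReal_ne_top hR.le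
    _ = δ := ENNReal.toReal_ofReal hδ.le

lemma dist_int_point (μ : Measure ℝ) [IsProbabilityMeasure μ] {g : ℝ → ℝ}
    (hg : Measurable g) {C : ℝ} (hC : ∀ x, |g x| ≤ C) {M : ℝ} (hM0 : 0 ≤ M)
    (hM : ∀ x y, |g x - g y| ≤ M * |x - y|) (R : ℕ) :
    |∫ x, g x ∂μ - g 0| ≤ M * R + 2*C*(μ {x : ℝ | (R:ℝ) < |x|}).toReal := by
  have hC0 : 0 ≤ C := le_trans (abs_nonneg _) (hC 0)
  have hmeasR : MeasurableSet {x : ℝ | (R:ℝ) < |x|} :=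
    measurableSet_lt measurable_const measurable_id.abs
  have hint_g : Integrable g μ := bdd_integrable μ hg hC
  have hint_d : Integrable (fun x => |g x - g 0|) μ :=
    bdd_integrable μ ((hg.sub measurable_const).abs)
      (C := 2*C) (fun x => by
        rw [abs_abs]
        calc |g x - g 0| ≤ |g x| + |g 0| := abs_sub _ _
          _ ≤ C + C := add_le_add (hC x) (hC 0)
          _ = 2*C := by ring)
  have hint_rhs : Integrable
      (fun x => M * (R:ℝ) + ({x : ℝ | (R:ℝ) < |x|}).indicator (fun _ => 2*C) x) μ :=
    (integrable_const _).add ((integrable_const (2*C)).indicator hmeasR)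
  have step1 : ∫ x, g x ∂μ - g 0 = ∫ x, (g x - g 0) ∂μ := by
    rw [integral_sub hint_g (integrable_const _), integral_const]
    simp
  rw [step1]
  calc |∫ x, (g x - g 0) ∂μ| ≤ ∫ x, |g x - g 0| ∂μ := by
        simpa using norm_integral_le_integral_norm (fun x => g x - g 0) (μ := μ)
    _ ≤ ∫ x, (M * (R:ℝ) + ({x : ℝ | (R:ℝ) < |x|}).indicator (fun _ => 2*C) x) ∂μ := by
        apply integral_mono hint_d hint_rhs
        intro x
        dsimp only
        by_cases hx : (R:ℝ) < |x|
        · have hxm : x ∈ {x : ℝ | (R:ℝ) < |x|} := hx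
          rw [Set.indicator_of_mem hxm]
          have : |g x - g 0| ≤ 2*C := by
            calc |g x - g 0| ≤ |g x| + |g 0| := abs_sub _ _
              _ ≤ C + C := add_le_add (hC x) (hC 0)
              _ = 2*C := by ring
          have hMR : 0 ≤ M * (R:ℝ) := mul_nonneg hM0 (Nat.cast_nonneg R)
          linarith
        · have hxm : x ∉ {x : ℝ | (R:ℝ) < |x|} := hx
          rw [Set.indicator_of_notMem hxm]
          push_neg at hx
          calc |g x - g 0| ≤ M * |x - 0| := hM x 0
            _ = M * |x| := by rw [sub_zero]
            _ ≤ M * (R:ℝ) := mul_le_mul_of_nonneg_left hx hM0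
            _ = M * (R:ℝ) + 0 := by ring
    _ = M * R + 2*C*(μ {x : ℝ | (R:ℝ) < |x|}).toReal := by
        rw [integral_add (integrable_const _) ((integrable_const (2*C)).indicator hmeasR),
          integral_const, integral_indicator_const _ hmeasR]
        simp [smul_eq_mul, Measure.real]
        ring

lemma int_close (hα : 2 ≤ α) (hp0 : 0 < p) (hp1 : p < 1)
    (μ ν : Measure ℝ) [IsProbabilityMeasure μ] [IsProbabilityMeasure ν]
    (hinvμ : Hinv α β p μ) (hinvν : Hinv α β p ν)
    {f : ℝ → ℝ} (hf : Measurable f) {C : ℝ} (hC : ∀ x, |f x| ≤ C)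
    {K : ℝ} (hK0 : 0 ≤ K) (hK : ∀ x y, |f x - f y| ≤ K * |x - y|) :
    ∫ x, f x ∂μ = ∫ x, f x ∂ν := by
  have hαpos : (0:ℝ) < (α:ℝ) := by exact_mod_cast Nat.lt_of_lt_of_le Nat.zero_lt_two hα
  have hC0 : 0 ≤ C := le_trans (abs_nonneg _) (hC 0)
  set l : ℝ := p + (1-p)/α with hl
  have hl0 : 0 ≤ l := by
    have : (0:ℝ) ≤ (1-p)/α := div_nonneg (by linarith) hαpos.le
    simp only [hl]; linarith
  have hl1 : l < 1 := by
    have h2 : (1-p)/α < 1 - p := by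
      apply div_lt_self (by linarith)
      exact_mod_cast Nat.lt_of_lt_of_le Nat.one_lt_two hα
    simp only [hl]; linarith
  have main : ∀ ε : ℝ, 0 < ε → |∫ x, f x ∂μ - ∫ x, f x ∂ν| ≤ ε := by
    intro ε hε
    have hδ : 0 < ε / (8*(C+1)) := by positivity
    obtain ⟨R1, hR1⟩ := tail_small μ hδ
    obtain ⟨R2, hR2⟩ := tail_small ν hδ
    set R : ℕ := max R1 R2 with hR
    have hR1' : (μ {x : ℝ | (R:ℝ) < |x|}).toReal ≤ ε / (8*(C+1)) := by
      refine le_trans ?_ hR1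
      apply ENNReal.toReal_mono (measure_lt_top μ _).ne
      apply measure_mono
      intro x hx
      simp only [mem_setOf_eq] at hx ⊢
      have : (R1:ℝ) ≤ (R:ℝ) := by exact_mod_cast Nat.le_max_left R1 R2
      linarith
    have hR2' : (ν {x : ℝ | (R:ℝ) < |x|}).toReal ≤ ε / (8*(C+1)) := by
      refine le_trans ?_ hR2
      apply ENNReal.toReal_mono (measure_lt_top ν _).ne
      apply measure_mono
      intro x hx
      simp only [mem_setOf_eq] at hx ⊢
      have : (R2:ℝ) ≤ (R:ℝ) := by exact_mod_cast Nat.le_max_right R1 R2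
      linarith
    -- choose n with K * l^n * R small
    have htend : Tendsto (fun n : ℕ => K * l^n * (R:ℝ)) atTop (nhds 0) := by
      have h1 : Tendsto (fun n : ℕ => l^n) atTop (nhds 0) :=
        tendsto_pow_atTop_nhds_zero_of_lt_one hl0 hl1
      have h2 := (h1.const_mul K).mul_const (R:ℝ)
      simpa using h2
    have hε4 : 0 < ε/4 := by positivity
    obtain ⟨n, hn⟩ := (htend.eventually_lt_const hε4).exists
    -- apply dist_int_point to g := itg n
    set g := itg α β p f n with hg
    have hgmeas : Measurable g := itg_meas hf n
    have hgC : ∀ x, |g x| ≤ C := itg_bound hp0 hp1 hC n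
    have hgM : ∀ x y, |g x - g y| ≤ (K * l^n) * |x - y| := by
      intro x y
      simpa [mul_assoc] using itg_lip hα hp0 hp1 hK0 hK n x y
    have hM0 : 0 ≤ K * l^n := mul_nonneg hK0 (pow_nonneg hl0 n)
    have hdμ := dist_int_point μ hgmeas hgC hM0 hgM R
    have hdν := dist_int_point ν hgmeas hgC hM0 hgM R
    have heqμ : ∫ x, g x ∂μ = ∫ x, f x ∂μ := itg_integral hα hp0 hp1 μ hinvμ hf hC n
    have heqν : ∫ x, g x ∂ν = ∫ x, f x ∂ν := itg_integral hα hp0 hp1 ν hinvν hf hC n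
    rw [heqμ] at hdμ
    rw [heqν] at hdν
    have htail : 2*C*(μ {x : ℝ | (R:ℝ) < |x|}).toReal + 2*C*(ν {x : ℝ | (R:ℝ) < |x|}).toReal
        ≤ ε/2 := by
      have b1 : 2*C*(μ {x : ℝ | (R:ℝ) < |x|}).toReal ≤ 2*C*(ε / (8*(C+1))) :=
        mul_le_mul_of_nonneg_left hR1' (by linarith)
      have b2 : 2*C*(ν {x : ℝ | (R:ℝ) < |x|}).toReal ≤ 2*C*(ε / (8*(C+1))) :=
        mul_le_mul_of_nonneg_left hR2' (by linarith)
      have : 2*C*(ε / (8*(C+1))) ≤ ε/4 := by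
        have h1 : (0:ℝ) < C + 1 := by linarith
        have key : 2*C*(ε/(8*(C+1))) = ε * (C/(4*(C+1))) := by field_simp; ring
        rw [key]
        have h2 : C/(4*(C+1)) ≤ 1/4 := by
          rw [div_le_div_iff₀ (by positivity) (by norm_num)]
          nlinarith
        calc ε * (C/(4*(C+1))) ≤ ε * (1/4) := mul_le_mul_of_nonneg_left h2 hε.le
          _ = ε/4 := by ring
      linarith
    calc |∫ x, f x ∂μ - ∫ x, f x ∂ν|
        ≤ |∫ x, f x ∂μ - g 0| + |∫ x, f x ∂ν - g 0| := by
          have := abs_sub (∫ x, f x ∂μ - g 0) (∫ x, f x ∂ν - g 0)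
          have heq : (∫ x, f x ∂μ - g 0) - (∫ x, f x ∂ν - g 0)
              = ∫ x, f x ∂μ - ∫ x, f x ∂ν := by ring
          rw [heq] at this
          exact this
      _ ≤ (K * l^n * R + 2*C*(μ {x : ℝ | (R:ℝ) < |x|}).toReal)
          + (K * l^n * R + 2*C*(ν {x : ℝ | (R:ℝ) < |x|}).toReal) := add_le_add hdμ hdν
      _ ≤ ε/4 + ε/4 + ε/2 := by linarith [hn.le]
      _ = ε := by ring
  have habs : |∫ x, f x ∂μ - ∫ x, f x ∂ν| ≤ 0 := by
    apply le_of_forall_pos_le_add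
    intro ε hε
    simpa using main ε hε
  have := abs_nonpos_iff.mp habs
  linarith [sub_eq_zero.mp this]

/-- ramp function approximating the indicator of `Iic a`. -/
noncomputable def ramp (a δ x : ℝ) : ℝ := 1 - max 0 (min 1 ((x - a)/δ))

lemma ramp_meas (a δ : ℝ) : Measurable (ramp a δ) := by
  apply measurable_const.sub
  apply measurable_const.max
  apply measurable_const.min
  exact (measurable_id.sub_const a).div_const δ

lemma ramp_bound (a δ x : ℝ) : |ramp a δ x| ≤ 1 := by
  rw [abs_le]
  constructor
  · have : max 0 (min 1 ((x - a)/δ)) ≤ 1 :=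
      max_le zero_le_one (min_le_left _ _)
    simp only [ramp]; linarith
  · have : 0 ≤ max 0 (min 1 ((x - a)/δ)) := le_max_left _ _
    simp only [ramp]; linarith

lemma ramp_lip {δ : ℝ} (hδ : 0 < δ) (a : ℝ) :
    ∀ x y, |ramp a δ x - ramp a δ y| ≤ (1/δ) * |x - y| := by
  intro x y
  have h1 : ramp a δ x - ramp a δ y
      = max 0 (min 1 ((y - a)/δ)) - max 0 (min 1 ((x - a)/δ)) := by
    simp only [ramp]; ring
  rw [h1]
  calc |max 0 (min 1 ((y - a)/δ)) - max 0 (min 1 ((x - a)/δ))|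
      = |max (min 1 ((y - a)/δ)) 0 - max (min 1 ((x - a)/δ)) 0| := by
        rw [max_comm 0 _, max_comm 0 _]
    _ ≤ |min 1 ((y - a)/δ) - min 1 ((x - a)/δ)| := abs_max_sub_max_le_abs _ _ _
    _ ≤ max |1 - 1| |(y - a)/δ - (x - a)/δ| := abs_min_sub_min_le_max _ _ _ _
    _ = |(y - a)/δ - (x - a)/δ| := by simp
    _ = (1/δ) * |x - y| := by
        rw [div_sub_div_same, abs_div, abs_of_pos hδ, abs_sub_comm]
        ring
lemma ramp_one {a δ x : ℝ} (hδ : 0 < δ) (hx : x ≤ a) : ramp a δ x = 1 := by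
  have h1 : (x - a)/δ ≤ 0 := div_nonpos_of_nonpos_of_nonneg (by linarith) hδ.le
  have h2 : min 1 ((x - a)/δ) ≤ 0 := le_trans (min_le_right _ _) h1
  simp only [ramp, max_eq_left h2, sub_zero]

lemma ramp_zero {a δ x : ℝ} (hδ : 0 < δ) (hx : a + δ ≤ x) : ramp a δ x = 0 := by
  have h1 : (1:ℝ) ≤ (x - a)/δ := by
    rw [le_div_iff₀ hδ]; linarith
  have h2 : min 1 ((x - a)/δ) = 1 := min_eq_left h1
  simp [ramp, h2]

lemma ramp_mem {a δ x : ℝ} : 0 ≤ ramp a δ x ∧ ramp a δ x ≤ 1 := by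
  have h := ramp_bound a δ x
  rw [abs_le] at h
  constructor
  · have : max 0 (min 1 ((x - a)/δ)) ≤ 1 := max_le zero_le_one (min_le_left _ _)
    simp only [ramp]; linarith
  · exact h.2

lemma ramp_int_bounds (μ : Measure ℝ) [IsProbabilityMeasure μ] (a : ℝ) {δ : ℝ} (hδ : 0 < δ) :
    (μ (Iic a)).toReal ≤ ∫ x, ramp a δ x ∂μ ∧
    ∫ x, ramp a δ x ∂μ ≤ (μ (Iic (a+δ))).toReal := by
  have hint : Integrable (ramp a δ) μ := bdd_integrable μ (ramp_meas a δ) (ramp_bound a δ)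
  constructor
  · have h1 : ∫ x, (Iic a).indicator (fun _ => (1:ℝ)) x ∂μ = (μ (Iic a)).toReal := by
      rw [integral_indicator_const _ measurableSet_Iic]; simp [Measure.real]
    rw [← h1]
    apply integral_mono ((integrable_const (1:ℝ)).indicator measurableSet_Iic) hint
    intro x
    by_cases hx : x ∈ Iic a
    · rw [Set.indicator_of_mem hx]
      rw [ramp_one hδ hx]
    · rw [Set.indicator_of_notMem hx]
      exact ramp_mem.1
  · have h1 : ∫ x, (Iic (a+δ)).indicator (fun _ => (1:ℝ)) x ∂μ = (μ (Iic (a+δ))).toReal := by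
      rw [integral_indicator_const _ measurableSet_Iic]; simp [Measure.real]
    rw [← h1]
    apply integral_mono hint ((integrable_const (1:ℝ)).indicator measurableSet_Iic)
    intro x
    by_cases hx : x ∈ Iic (a+δ)
    · rw [Set.indicator_of_mem hx]
      exact ramp_mem.2
    · rw [Set.indicator_of_notMem hx]
      rw [ramp_zero hδ (by simpa [not_le] using (lt_of_not_ge (by simpa [Iic] using hx)).le)]

lemma Iic_le (hα : 2 ≤ α) (hp0 : 0 < p) (hp1 : p < 1)
    (μ ν : Measure ℝ) [IsProbabilityMeasure μ] [IsProbabilityMeasure ν]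
    (hinvμ : Hinv α β p μ) (hinvν : Hinv α β p ν) (a : ℝ) : μ (Iic a) ≤ ν (Iic a) := by
  have step : ∀ m : ℕ, μ (Iic a) ≤ ν (Iic (a + 1/(m+1))) := by
    intro m
    have hδ : (0:ℝ) < 1/(m+1) := by positivity
    have hb := ramp_int_bounds μ a hδ
    have hb' := ramp_int_bounds ν a hδ
    have heq : ∫ x, ramp a (1/(m+1)) x ∂μ = ∫ x, ramp a (1/(m+1)) x ∂ν :=
      int_close hα hp0 hp1 μ ν hinvμ hinvν (ramp_meas _ _) (ramp_bound _ _)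
        (le_of_lt (by positivity : (0:ℝ) < 1/(1/(m+1)))) (ramp_lip hδ a)
    have : (μ (Iic a)).toReal ≤ (ν (Iic (a + 1/(m+1)))).toReal := by
      calc (μ (Iic a)).toReal ≤ ∫ x, ramp a (1/(m+1)) x ∂μ := hb.1
        _ = ∫ x, ramp a (1/(m+1)) x ∂ν := heq
        _ ≤ (ν (Iic (a + 1/(m+1)))).toReal := hb'.2
    exact (ENNReal.toReal_le_toReal (measure_lt_top μ _).ne (measure_lt_top ν _).ne).mp this
  have hiInter : ⋂ m : ℕ, Iic (a + 1/((m:ℝ)+1)) = Iic a := by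
    ext x
    simp only [mem_iInter, mem_Iic]
    constructor
    · intro h
      by_contra hx
      push_neg at hx
      obtain ⟨m, hm⟩ := exists_nat_one_div_lt (by linarith : (0:ℝ) < x - a)
      have := h m
      linarith
    · intro h m
      have : (0:ℝ) < 1/((m:ℝ)+1) := by positivity
      linarith
  have hanti : Antitone (fun m : ℕ => Iic (a + 1/((m:ℝ)+1))) := by
    intro m n hmn
    apply Iic_subset_Iic.mpr
    have h1 : ((m:ℝ)+1) ≤ ((n:ℝ)+1) := by exact_mod_cast Nat.succ_le_succ hmn
    have h2 : (0:ℝ) < (m:ℝ)+1 := by positivity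
    have := one_div_le_one_div_of_le h2 h1
    linarith
  have := hanti.measure_iInter (μ := ν)
    (fun m => measurableSet_Iic.nullMeasurableSet) ⟨0, (measure_lt_top ν _).ne⟩
  rw [hiInter] at this
  rw [this]
  exact le_iInf step

/-- Uniqueness of the stationary measure. -/
lemma key_unique (hα : 2 ≤ α) (hp0 : 0 < p) (hp1 : p < 1)
    (μ ν : Measure ℝ) [IsProbabilityMeasure μ] [IsProbabilityMeasure ν]
    (hinvμ : Hinv α β p μ) (hinvν : Hinv α β p ν) : μ = ν := by
  apply Measure.ext_of_Iic
  intro a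
  exact le_antisymm (Iic_le hα hp0 hp1 μ ν hinvμ hinvν a)
    (Iic_le hα hp0 hp1 ν μ hinvν hinvμ a)

/-- weights `w_j = -log θ_j`. -/
noncomputable def wre (α : ℕ) (μ : Measure ℝ) (j : ℕ) : ℝ := - Real.log (th α μ j).toReal

noncomputable def SR (α : ℕ) (μ : Measure ℝ) (n : ℕ) (x : ℝ) : ℝ :=
  ∑ i ∈ Finset.range n, wre α μ (dg α (i + 1) x)

noncomputable def LL (α : ℕ) (μ : Measure ℝ) (x : ℝ) : ℝ≥0∞ :=
  liminf (fun n : ℕ => ENNReal.ofReal (SR α μ n x / n)) atTop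

lemma wre_nonneg (μ : Measure ℝ) [IsProbabilityMeasure μ] (j : ℕ) : 0 ≤ wre α μ j := by
  have h1 : (th α μ j).toReal ≤ 1 := by
    simpa using ENNReal.toReal_mono (by simp) (th_le_one μ j)
  simpa [wre] using Real.log_nonpos (ENNReal.toReal_nonneg) h1

lemma measurable_LL (μ : Measure ℝ) : Measurable (LL α μ) := by
  apply Measurable.liminf
  intro n
  apply ENNReal.measurable_ofReal.comp
  apply Measurable.div_const
  exact Finset.measurable_sum _ (fun i _ =>
    (Measurable.of_discrete (f := wre α μ)).comp (measurable_dg (i+1)))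

lemma LL_add (hα : 2 ≤ α) (hβ : 1 ≤ β) (μ : Measure ℝ) (x : ℝ) :
    LL α μ (x + (β : ℝ)) = LL α μ x := by
  have h : ∀ n, SR α μ n (x + (β:ℝ)) = SR α μ n x := by
    intro n
    unfold SR
    apply Finset.sum_congr rfl
    intro i _
    rw [dg_add_nat hα (Nat.succ_le_succ (Nat.zero_le i))]
  unfold LL
  simp_rw [h]

/-- liminf comparison for Cesàro-type sequences. -/
lemma liminf_div_le {u v : ℕ → ℝ} {c : ℝ} (hc : 0 ≤ c)
    (h : ∀ n, u n ≤ v n + c) :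
    liminf (fun n : ℕ => ENNReal.ofReal (u n / n)) atTop
      ≤ liminf (fun n : ℕ => ENNReal.ofReal (v n / n)) atTop := by
  apply ENNReal.le_of_forall_pos_le_add
  intro ε hε _
  have hεR : (0:ℝ) < (ε:ℝ) := hε
  have htend : Tendsto (fun n : ℕ => c / n) atTop (nhds 0) :=
    tendsto_const_div_atTop_nhds_zero_nat c
  have hev : ∀ᶠ n : ℕ in atTop, c / n < (ε:ℝ) := htend.eventually_lt_const hεR
  have hmain : ∀ᶠ n : ℕ in atTop,
      ENNReal.ofReal (u n / n) ≤ ENNReal.ofReal (v n / n) + (ε : ℝ≥0∞) := by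
    filter_upwards [hev, eventually_ge_atTop 1] with n hn hn1
    have hnpos : (0:ℝ) < (n:ℝ) := by exact_mod_cast hn1
    have h1 : u n / n ≤ v n / n + c / n := by
      rw [← add_div]
      gcongr
      exact h n
    calc ENNReal.ofReal (u n / n) ≤ ENNReal.ofReal (v n / n + c / n) :=
          ENNReal.ofReal_le_ofReal h1
      _ ≤ ENNReal.ofReal (v n / n) + ENNReal.ofReal (c / n) := ENNReal.ofReal_add_le
      _ ≤ ENNReal.ofReal (v n / n) + (ε : ℝ≥0∞) := by
          gcongr
          calc ENNReal.ofReal (c / n) ≤ ENNReal.ofReal (ε:ℝ) := ENNReal.ofReal_le_ofReal hn.le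
            _ = (ε : ℝ≥0∞) := ENNReal.ofReal_coe_nnreal
  calc liminf (fun n : ℕ => ENNReal.ofReal (u n / n)) atTop
      ≤ liminf (fun n : ℕ => ENNReal.ofReal (v n / n) + (ε : ℝ≥0∞)) atTop :=
        liminf_le_liminf hmain
    _ ≤ liminf (fun n : ℕ => ENNReal.ofReal (v n / n)) atTop + (ε : ℝ≥0∞) := by
        rw [liminf_eq]
        apply sSup_le
        intro b hb
        simp only [mem_setOf_eq] at hb
        have hb' : b - (ε : ℝ≥0∞) ≤ liminf (fun n : ℕ => ENNReal.ofReal (v n / n)) atTop := by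
          rw [liminf_eq]
          apply le_sSup
          simp only [mem_setOf_eq]
          filter_upwards [hb] with n hn
          exact tsub_le_iff_right.mpr hn
        calc b ≤ b - (ε : ℝ≥0∞) + (ε : ℝ≥0∞) := le_tsub_add
          _ ≤ liminf (fun n : ℕ => ENNReal.ofReal (v n / n)) atTop + (ε : ℝ≥0∞) := by gcongr

lemma SR_nonneg (μ : Measure ℝ) [IsProbabilityMeasure μ] (n : ℕ) (x : ℝ) : 0 ≤ SR α μ n x :=
  Finset.sum_nonneg fun i _ => wre_nonneg μ _

lemma SR_mono (μ : Measure ℝ) [IsProbabilityMeasure μ] {m n : ℕ} (h : m ≤ n) (x : ℝ) :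
    SR α μ m x ≤ SR α μ n x := by
  apply Finset.sum_le_sum_of_subset_of_nonneg (Finset.range_subset_range.mpr h)
  intro i _ _
  exact wre_nonneg μ _

lemma wre_le_M (hα : 2 ≤ α) (μ : Measure ℝ) [IsProbabilityMeasure μ] {j : ℕ} (hj : j < α) :
    wre α μ j ≤ ∑ k ∈ Finset.range α, wre α μ k :=
  Finset.single_le_sum (fun k _ => wre_nonneg μ k) (Finset.mem_range.mpr hj)

lemma LL_div (hα : 2 ≤ α) (μ : Measure ℝ) [IsProbabilityMeasure μ] (x : ℝ) :
    LL α μ (x / (α : ℝ)) = LL α μ x := by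
  set M := ∑ k ∈ Finset.range α, wre α μ k with hM
  have hM0 : 0 ≤ M := Finset.sum_nonneg fun k _ => wre_nonneg μ k
  set c := wre α μ (dg α 0 x) with hc
  have hc0 : 0 ≤ c := wre_nonneg μ _
  have hSRdiv : ∀ n : ℕ, SR α μ (n+1) (x / (α:ℝ)) = c + SR α μ n x := by
    intro n
    unfold SR
    have h1 : ∀ i, wre α μ (dg α (i+1) (x / (α:ℝ))) = wre α μ (dg α i x) := by
      intro i; rw [dg_div hα]
    simp_rw [h1]
    rw [Finset.sum_range_succ']
    ring
  have hu : ∀ n, SR α μ n (x / (α:ℝ)) ≤ SR α μ n x + (c + M) := by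
    intro n
    match n with
    | 0 => simp [SR]; linarith
    | Nat.succ m =>
      rw [hSRdiv m]
      have := SR_mono (α := α) μ (Nat.le_succ m) x
      linarith
  have hv : ∀ n, SR α μ n x ≤ SR α μ n (x / (α:ℝ)) + (c + M) := by
    intro n
    match n with
    | 0 => simp [SR]; linarith
    | Nat.succ m =>
      rw [hSRdiv m]
      have h2 : SR α μ (m+1) x = SR α μ m x + wre α μ (dg α (m+1) x) := by
        unfold SR; rw [Finset.sum_range_succ]
      have h3 : wre α μ (dg α (m+1) x) ≤ M := wre_le_M hα μ (dg_lt hα (m+1) x)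
      linarith
  exact le_antisymm (liminf_div_le (by linarith) hu) (liminf_div_le (by linarith) hv)

lemma lint_SR (hα : 2 ≤ α) (hβ : 1 ≤ β) (hp0 : 0 < p) (hp1 : p < 1)
    (μ : Measure ℝ) [IsProbabilityMeasure μ] (hinv : Hinv α β p μ) {n : ℕ} (hn : n ≠ 0) :
    ∫⁻ x, ENNReal.ofReal (SR α μ n x / n) ∂μ = ENNReal.ofReal (ent α μ) := by
  have hnR : (0:ℝ) < (n:ℝ) := by exact_mod_cast Nat.pos_of_ne_zero hn
  have hWmeas : ∀ i : ℕ, Measurable (fun x : ℝ => ENNReal.ofReal (wre α μ (dg α i x))) :=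
    fun i => ENNReal.measurable_ofReal.comp
      ((Measurable.of_discrete (f := wre α μ)).comp (measurable_dg i))
  have hpt : ∀ x : ℝ, ENNReal.ofReal (SR α μ n x / n)
      = (∑ i ∈ Finset.range n, ENNReal.ofReal (wre α μ (dg α (i+1) x))) * ((n:ℝ≥0∞))⁻¹ := by
    intro x
    rw [div_eq_mul_inv, ENNReal.ofReal_mul' (by positivity)]
    congr 1
    · exact ENNReal.ofReal_sum_of_nonneg (fun i _ => wre_nonneg μ _)
    · rw [ENNReal.ofReal_inv_of_pos hnR, ENNReal.ofReal_natCast]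
  simp_rw [hpt]
  rw [lintegral_mul_const _ (Finset.measurable_sum _ (fun i _ => hWmeas (i+1)))]
  rw [lintegral_finset_sum _ (fun i _ => hWmeas (i+1))]
  have hterm : ∀ i ∈ Finset.range n,
      ∫⁻ x, ENNReal.ofReal (wre α μ (dg α (i+1) x)) ∂μ = ENNReal.ofReal (ent α μ) := by
    intro i _
    have hdmeas := measurable_dg (α := α) (i+1)
    rw [← lintegral_map (f := fun j : ℕ => ENNReal.ofReal (wre α μ j))
      Measurable.of_discrete hdmeas]
    rw [lintegral_countable']
    have happ : ∀ j : ℕ, (μ.map (dg α (i+1))) {j} = th α μ j := by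
      intro j
      rw [Measure.map_apply hdmeas (measurableSet_singleton j)]
      exact marginal hα hβ hp0 hp1 μ hinv (i+1) j
    simp_rw [happ]
    rw [tsum_eq_sum (s := Finset.range α) (fun j hj => by
      rw [th_zero_of_ge hα μ (le_of_not_gt (fun hc => hj (Finset.mem_range.mpr hc))), mul_zero])]
    have hsummand : ∀ j ∈ Finset.range α, ENNReal.ofReal (wre α μ j) * th α μ j
        = ENNReal.ofReal ((th α μ j).toReal * (- Real.log (th α μ j).toReal)) := by
      intro j _
      have hth : th α μ j = ENNReal.ofReal ((th α μ j).toReal) :=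
        (ENNReal.ofReal_toReal (measure_ne_top μ _)).symm
      conv_lhs => rw [hth]
      rw [← ENNReal.ofReal_mul (wre_nonneg μ j)]
      congr 1
      simp only [wre]
      ring
    rw [Finset.sum_congr rfl hsummand,
      ← ENNReal.ofReal_sum_of_nonneg (fun j _ => mul_nonneg ENNReal.toReal_nonneg
        (by simpa [wre] using wre_nonneg (α := α) μ j))]
    rfl
  rw [Finset.sum_congr rfl hterm, Finset.sum_const, Finset.card_range, nsmul_eq_mul,
    mul_comm ((n:ℝ≥0∞)) (ENNReal.ofReal (ent α μ)), mul_assoc,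
    ENNReal.mul_inv_cancel (by exact_mod_cast hn) (ENNReal.natCast_ne_top n), mul_one]

lemma ent_nonneg (μ : Measure ℝ) [IsProbabilityMeasure μ] : 0 ≤ ent α μ := by
  apply Finset.sum_nonneg
  intro k _
  exact mul_nonneg ENNReal.toReal_nonneg (wre_nonneg (α := α) μ k)

lemma ae_LL_le (hα : 2 ≤ α) (hβ : 1 ≤ β) (hp0 : 0 < p) (hp1 : p < 1)
    (μ : Measure ℝ) [IsProbabilityMeasure μ] (hinv : Hinv α β p μ) :
    ∀ᵐ x ∂μ, LL α μ x ≤ ENNReal.ofReal (ent α μ) := by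
  have hFmeas : ∀ n : ℕ, Measurable (fun x : ℝ => ENNReal.ofReal (SR α μ n x / n)) := by
    intro n
    apply ENNReal.measurable_ofReal.comp
    apply Measurable.div_const
    exact Finset.measurable_sum _ (fun i _ =>
      (Measurable.of_discrete (f := wre α μ)).comp (measurable_dg (i+1)))
  have fatou : ∫⁻ x, LL α μ x ∂μ ≤ ENNReal.ofReal (ent α μ) := by
    refine le_trans (lintegral_liminf_le hFmeas) ?_
    have hev : ∀ᶠ n : ℕ in atTop, ∫⁻ x, ENNReal.ofReal (SR α μ n x / n) ∂μ
        = ENNReal.ofReal (ent α μ) := by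
      filter_upwards [eventually_ge_atTop 1] with n hn
      exact lint_SR hα hβ hp0 hp1 μ hinv (by omega)
    rw [liminf_congr hev, liminf_const]
  have hzero : ∀ m : ℕ,
      μ {x : ℝ | ENNReal.ofReal (ent α μ + 1/((m:ℝ)+1)) < LL α μ x} = 0 := by
    intro m
    set c := ENNReal.ofReal (ent α μ + 1/((m:ℝ)+1)) with hcdef
    set B := {x : ℝ | c < LL α μ x} with hBdef
    have hBmeas : MeasurableSet B := measurableSet_lt measurable_const (measurable_LL μ)
    by_contra hB
    have hpre1 : (fun y : ℝ => y + (β:ℝ)) ⁻¹' B = B := by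
      ext y
      simp only [hBdef, mem_preimage, mem_setOf_eq]
      rw [LL_add hα hβ μ y]
    have hpre2 : (fun y : ℝ => y / (α:ℝ)) ⁻¹' B = B := by
      ext y
      simp only [hBdef, mem_preimage, mem_setOf_eq]
      rw [LL_div hα μ y]
    have hBfin : μ B ≠ ∞ := measure_ne_top μ B
    set ν := (μ B)⁻¹ • μ.restrict B with hν
    have hνapp : ∀ A : Set ℝ, MeasurableSet A → ν A = (μ B)⁻¹ * μ (A ∩ B) := by
      intro A hA
      rw [hν, Measure.smul_apply, Measure.restrict_apply hA, smul_eq_mul]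
    have hν1 : IsProbabilityMeasure ν := by
      constructor
      rw [hνapp univ MeasurableSet.univ, univ_inter, ENNReal.inv_mul_cancel hB hBfin]
    have hνinv : Hinv α β p ν := by
      intro A hA
      have hA1 : MeasurableSet ((fun y : ℝ => y + (β:ℝ)) ⁻¹' A) :=
        (measurable_id.add_const _) hA
      have hA2 : MeasurableSet ((fun y : ℝ => y / (α:ℝ)) ⁻¹' A) :=
        (measurable_id.div_const _) hA
      rw [hνapp A hA, hνapp _ hA1, hνapp _ hA2, hinv (A ∩ B) (hA.inter hBmeas)]
      have e1 : (fun y : ℝ => y + (β:ℝ)) ⁻¹' (A ∩ B)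
          = ((fun y : ℝ => y + (β:ℝ)) ⁻¹' A) ∩ B := by
        rw [preimage_inter, hpre1]
      have e2 : (fun y : ℝ => y / (α:ℝ)) ⁻¹' (A ∩ B)
          = ((fun y : ℝ => y / (α:ℝ)) ⁻¹' A) ∩ B := by
        rw [preimage_inter, hpre2]
      rw [e1, e2]
      ring
    have huniq := key_unique hα hp0 hp1 ν μ hνinv hinv
    have hB1 : μ B = 1 := by
      have hνB : ν B = 1 := by
        rw [hνapp B hBmeas, inter_self, ENNReal.inv_mul_cancel hB hBfin]
      rw [huniq] at hνB
      exact hνB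
    have hae : ∀ᵐ x ∂μ, x ∈ B := by
      have hcompl : μ Bᶜ = 0 := by
        rw [measure_compl hBmeas hBfin, hB1, measure_univ, tsub_self]
      rw [ae_iff]
      exact hcompl
    have hlow : ENNReal.ofReal (ent α μ + 1/((m:ℝ)+1)) ≤ ∫⁻ x, LL α μ x ∂μ := by
      calc ENNReal.ofReal (ent α μ + 1/((m:ℝ)+1)) = ∫⁻ _, c ∂μ := by
            rw [lintegral_const, measure_univ, mul_one]
        _ ≤ ∫⁻ x, LL α μ x ∂μ := by
            apply lintegral_mono_ae
            filter_upwards [hae] with x hx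
            exact (le_of_lt hx)
    have hent0 := ent_nonneg (α := α) μ
    have hcontr : ent α μ + 1/((m:ℝ)+1) ≤ ent α μ := by
      have h := le_trans hlow fatou
      rwa [ENNReal.ofReal_le_ofReal_iff hent0] at h
    have hmpos : (0:ℝ) < 1/((m:ℝ)+1) := by positivity
    linarith
  have hsub : {x : ℝ | ¬ LL α μ x ≤ ENNReal.ofReal (ent α μ)}
      ⊆ ⋃ m : ℕ, {x : ℝ | ENNReal.ofReal (ent α μ + 1/((m:ℝ)+1)) < LL α μ x} := by
    intro x hx
    simp only [mem_setOf_eq, not_le] at hx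
    rcases eq_or_ne (LL α μ x) ∞ with hinf | hfin
    · refine mem_iUnion.mpr ⟨0, ?_⟩
      simp only [mem_setOf_eq, hinf]
      exact ENNReal.ofReal_lt_top
    · have h1 : ent α μ < (LL α μ x).toReal := by
        rwa [ENNReal.ofReal_lt_iff_lt_toReal (ent_nonneg μ) hfin] at hx
      obtain ⟨m, hm⟩ :=
        exists_nat_one_div_lt (by linarith : (0:ℝ) < (LL α μ x).toReal - ent α μ)
      refine mem_iUnion.mpr ⟨m, ?_⟩
      simp only [mem_setOf_eq]
      rw [ENNReal.ofReal_lt_iff_lt_toReal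
        (add_nonneg (ent_nonneg μ) (by positivity)) hfin]
      linarith
  rw [ae_iff]
  exact measure_mono_null hsub (measure_iUnion_null hzero)

/-- cylinder data map -/
noncomputable def Psi (α n : ℕ) (x : ℝ) : ℤ × (Fin n → ℕ) :=
  (⌊x⌋, fun i => dg α (i + 1) x)

lemma measurable_Psi (α n : ℕ) : Measurable (Psi α n) := by
  refine Measurable.prod (Int.measurable_floor) ?_
  exact measurable_pi_iff.mpr fun i => measurable_dg (i+1)

noncomputable def qfn (α n : ℕ) (μ : Measure ℝ) (s : ℤ × (Fin n → ℕ)) : ℝ≥0∞ :=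
  Th μ s.1 * ∏ i : Fin n, th α μ (s.2 i)

lemma pi_tsum (hα : 2 ≤ α) (μ : Measure ℝ) [IsProbabilityMeasure μ] :
    ∀ n : ℕ, ∑' v : Fin n → ℕ, ∏ i : Fin n, th α μ (v i) = 1 := by
  intro n
  induction n with
  | zero =>
    haveI : Unique (Fin 0 → ℕ) := ⟨⟨fun i => i.elim0⟩, fun f => funext fun i => i.elim0⟩
    rw [tsum_eq_single (default : Fin 0 → ℕ) (fun b hb => absurd (Subsingleton.elim b default) hb)]
    simp
  | succ n ih =>
    set e := Fin.consEquiv (fun _ : Fin (n+1) => ℕ) with he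
    have hstep : ∀ y : ℕ × (Fin n → ℕ),
        (∏ i : Fin (n+1), th α μ ((e y) i))
          = th α μ y.1 * ∏ i : Fin n, th α μ (y.2 i) := by
      intro y
      rw [Fin.prod_univ_succ]
      simp [he, Fin.consEquiv, Fin.cons_zero, Fin.cons_succ]
    calc ∑' v : Fin (n+1) → ℕ, ∏ i : Fin (n+1), th α μ (v i)
        = ∑' y : ℕ × (Fin n → ℕ), ∏ i : Fin (n+1), th α μ ((e y) i) :=
          (e.tsum_eq _).symm
      _ = ∑' y : ℕ × (Fin n → ℕ), th α μ y.1 * ∏ i : Fin n, th α μ (y.2 i) :=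
          tsum_congr hstep
      _ = 1 := by
          rw [ENNReal.tsum_prod']
          have hinner : ∀ a : ℕ,
              (∑' b : Fin n → ℕ, th α μ a * ∏ i : Fin n, th α μ (b i)) = th α μ a := by
            intro a
            rw [ENNReal.tsum_mul_left, ih, mul_one]
          rw [tsum_congr hinner, th_tsum hα μ]

lemma qfn_tsum (hα : 2 ≤ α) (μ : Measure ℝ) [IsProbabilityMeasure μ] (n : ℕ) :
    ∑' s : ℤ × (Fin n → ℕ), qfn α n μ s = 1 := by
  unfold qfn
  rw [ENNReal.tsum_prod']
  have hinner : ∀ z : ℤ,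
      (∑' v : Fin n → ℕ, Th μ z * ∏ i : Fin n, th α μ (v i)) = Th μ z := by
    intro z
    rw [ENNReal.tsum_mul_left, pi_tsum hα μ n, mul_one]
  rw [tsum_congr hinner, Th_tsum μ]

lemma bad_bound (hα : 2 ≤ α) (μ : Measure ℝ) [IsProbabilityMeasure μ] (n : ℕ) {ε : ℝ}
    (hε : 0 < ε) :
    μ {x | μ (Psi α n ⁻¹' {Psi α n x}) < ENNReal.ofReal (Real.exp (-ε)) ^ n * qfn α n μ (Psi α n x)}
      ≤ ENNReal.ofReal (Real.exp (-ε)) ^ n := by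
  set e := ENNReal.ofReal (Real.exp (-ε)) ^ n with he
  set S := {s : ℤ × (Fin n → ℕ) | μ (Psi α n ⁻¹' {s}) < e * qfn α n μ s} with hS
  have hset : {x : ℝ | μ (Psi α n ⁻¹' {Psi α n x}) < e * qfn α n μ (Psi α n x)}
      = Psi α n ⁻¹' S := rfl
  rw [hset]
  have hdecomp : Psi α n ⁻¹' S = ⋃ s : S, Psi α n ⁻¹' {(s : ℤ × (Fin n → ℕ))} := by
    ext x
    simp only [mem_preimage, mem_iUnion, mem_singleton_iff]
    constructor
    · intro hx
      exact ⟨⟨Psi α n x, hx⟩, rfl⟩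
    · rintro ⟨s, hs⟩
      rw [hs]
      exact s.prop
  rw [hdecomp]
  calc μ (⋃ s : S, Psi α n ⁻¹' {(s : ℤ × (Fin n → ℕ))})
      ≤ ∑' s : S, μ (Psi α n ⁻¹' {(s : ℤ × (Fin n → ℕ))}) := measure_iUnion_le _
    _ ≤ ∑' s : S, e * qfn α n μ s := ENNReal.tsum_le_tsum (fun s => (s.prop).le)
    _ = e * ∑' s : S, qfn α n μ s := ENNReal.tsum_mul_left
    _ ≤ e * ∑' s : ℤ × (Fin n → ℕ), qfn α n μ s := by
        gcongr
        rw [tsum_subtype]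
        exact ENNReal.tsum_le_tsum (fun s => indicator_le_self _ _ s)
    _ = e := by rw [qfn_tsum hα μ n, mul_one]

lemma ae_eventually_good (hα : 2 ≤ α) (μ : Measure ℝ) [IsProbabilityMeasure μ] {ε : ℝ}
    (hε : 0 < ε) :
    ∀ᵐ x ∂μ, ∀ᶠ n in atTop,
      ENNReal.ofReal (Real.exp (-ε)) ^ n * qfn α n μ (Psi α n x) ≤ μ (Psi α n ⁻¹' {Psi α n x}) := by
  set r := ENNReal.ofReal (Real.exp (-ε)) with hr
  set E := fun n : ℕ => {x : ℝ |
    μ (Psi α n ⁻¹' {Psi α n x}) < r ^ n * qfn α n μ (Psi α n x)} with hE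
  have hr1 : r < 1 := by
    rw [hr]
    calc ENNReal.ofReal (Real.exp (-ε)) < ENNReal.ofReal 1 := by
          apply ENNReal.ofReal_lt_ofReal_iff_of_nonneg (Real.exp_nonneg _) |>.mpr
          rw [Real.exp_lt_one_iff]
          linarith
      _ = 1 := ENNReal.ofReal_one
  have hsum : (∑' n : ℕ, μ (E n)) ≠ ∞ := by
    have hle : ∀ n : ℕ, μ (E n) ≤ r ^ n := fun n => bad_bound hα μ n hε
    have h1 : (∑' n : ℕ, μ (E n)) ≤ ∑' n : ℕ, r ^ n := ENNReal.tsum_le_tsum hle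
    have h2 : (∑' n : ℕ, r ^ n) = (1 - r)⁻¹ := ENNReal.tsum_geometric r
    have h3 : (1 - r)⁻¹ ≠ ∞ := by
      rw [Ne, ENNReal.inv_eq_top, tsub_eq_zero_iff_le]
      exact not_le_of_gt hr1
    exact ne_top_of_le_ne_top (h2 ▸ h3) h1
  filter_upwards [ae_eventually_notMem hsum] with x hx
  filter_upwards [hx] with n hn
  rw [hE] at hn
  simp only [mem_setOf_eq, not_lt] at hn
  exact hn

lemma ae_pos (hα : 2 ≤ α) (hβ : 1 ≤ β) (hp0 : 0 < p) (hp1 : p < 1)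
    (μ : Measure ℝ) [IsProbabilityMeasure μ] (hinv : Hinv α β p μ) :
    ∀ᵐ x ∂μ, 0 < Th μ ⌊x⌋ ∧ ∀ i, 0 < th α μ (dg α i x) := by
  have h1 : μ {x : ℝ | Th μ ⌊x⌋ = 0} = 0 := by
    have hsub : {x : ℝ | Th μ ⌊x⌋ = 0}
        ⊆ ⋃ z : {z : ℤ // Th μ z = 0}, {x : ℝ | ⌊x⌋ = z.val} := by
      intro x hx
      exact mem_iUnion.mpr ⟨⟨⌊x⌋, hx⟩, rfl⟩
    exact measure_mono_null hsub (measure_iUnion_null fun z => z.prop)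
  have h2 : ∀ i : ℕ, μ {x : ℝ | th α μ (dg α i x) = 0} = 0 := by
    intro i
    have hsub : {x : ℝ | th α μ (dg α i x) = 0}
        ⊆ ⋃ j : {j : ℕ // th α μ j = 0}, {x : ℝ | dg α i x = j.val} := by
      intro x hx
      exact mem_iUnion.mpr ⟨⟨dg α i x, hx⟩, rfl⟩
    apply measure_mono_null hsub
    apply measure_iUnion_null
    intro j
    rw [marginal hα hβ hp0 hp1 μ hinv i j.val]
    exact j.prop
  have h3 : μ (⋃ i : ℕ, {x : ℝ | th α μ (dg α i x) = 0}) = 0 := measure_iUnion_null h2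
  rw [ae_iff]
  apply measure_mono_null _ (measure_union_null h1 h3)
  intro x hx
  simp only [mem_setOf_eq] at hx
  rw [not_and_or] at hx
  rcases hx with hx | hx
  · left
    simpa [pos_iff_ne_zero, not_not] using hx
  · right
    push_neg at hx
    obtain ⟨i, hi⟩ := hx
    refine mem_iUnion.mpr ⟨i, ?_⟩
    simpa [pos_iff_ne_zero, not_not] using hi

lemma cyl_subset_ball (hα : 2 ≤ α) (n : ℕ) (x : ℝ) :
    Psi α n ⁻¹' {Psi α n x} ⊆ Metric.ball x (((α : ℝ) ^ n)⁻¹) := by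
  intro y hy
  simp only [mem_preimage, mem_singleton_iff, Psi, Prod.mk.injEq] at hy
  have hd : ∀ i < n, dg α (i + 1) y = dg α (i + 1) x := fun i hi => congrFun hy.2 ⟨i, hi⟩
  exact Metric.mem_ball.mpr (dist_lt_of_data hα hy.1 hd)

lemma lowerLocalDim_nonneg (μ : Measure ℝ) [IsProbabilityMeasure μ] (x : ℝ) :
    0 ≤ lowerLocalDim μ x := by
  rw [lowerLocalDim, liminf_eq]
  set A := {a : ℝ | ∀ᶠ r in nhdsWithin 0 (Ioi 0),
    a ≤ Real.log (μ (Metric.ball x r)).toReal / Real.log r} with hA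
  have h0 : (0:ℝ) ∈ A := by
    have hev : ∀ᶠ r in nhdsWithin (0:ℝ) (Ioi 0), r ∈ Ioo (0:ℝ) 1 :=
      Ioo_mem_nhdsGT_of_mem ⟨le_refl 0, zero_lt_one⟩
    rw [hA, mem_setOf_eq]
    filter_upwards [hev] with r hr
    apply div_nonneg_of_nonpos
    · apply Real.log_nonpos ENNReal.toReal_nonneg
      exact ENNReal.toReal_mono ENNReal.one_ne_top prob_le_one
    · exact Real.log_nonpos hr.1.le hr.2.le
  by_cases hbdd : BddAbove A
  · exact le_csSup hbdd h0
  · rw [Real.sSup_of_not_bddAbove hbdd]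

lemma liminf_le_of_freq (μ : Measure ℝ) (x c : ℝ) (hc : 0 ≤ c) (hα : 2 ≤ α)
    (h : ∃ᶠ n in atTop,
      Real.log (μ (Metric.ball x (((α:ℝ)^n)⁻¹))).toReal / Real.log (((α:ℝ)^n)⁻¹) ≤ c) :
    lowerLocalDim μ x ≤ c := by
  have hαR : (1:ℝ) < (α:ℝ) := by exact_mod_cast Nat.lt_of_lt_of_le Nat.one_lt_two hα
  rw [lowerLocalDim, liminf_eq]
  apply Real.sSup_le _ hc
  intro a ha
  simp only [mem_setOf_eq] at ha
  have htend : Tendsto (fun n : ℕ => (((α:ℝ)^n)⁻¹)) atTop (nhdsWithin 0 (Ioi 0)) := by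
    rw [tendsto_nhdsWithin_iff]
    constructor
    · exact (tendsto_pow_atTop_atTop_of_one_lt hαR).inv_tendsto_atTop
    · apply Eventually.of_forall
      intro n
      have : (0:ℝ) < (α:ℝ)^n := by positivity
      exact inv_pos.mpr this
  have hev : ∀ᶠ n : ℕ in atTop,
      a ≤ Real.log (μ (Metric.ball x (((α:ℝ)^n)⁻¹))).toReal / Real.log (((α:ℝ)^n)⁻¹) :=
    htend.eventually ha
  obtain ⟨n, hn1, hn2⟩ := (h.and_eventually hev).exists
  exact le_trans hn2 hn1

lemma dim_ae_le (hα : 2 ≤ α) (hβ : 1 ≤ β) (hp0 : 0 < p) (hp1 : p < 1)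
    (μ : Measure ℝ) [IsProbabilityMeasure μ] (hinv : Hinv α β p μ) {ε : ℝ} (hε : 0 < ε) :
    ∀ᵐ x ∂μ, lowerLocalDim μ x ≤ (ent α μ + 2*ε) / Real.log α + ε := by
  have hαR : (1:ℝ) < (α:ℝ) := by exact_mod_cast Nat.lt_of_lt_of_le Nat.one_lt_two hα
  have hlogα : 0 < Real.log α := Real.log_pos hαR
  have hent0 := ent_nonneg (α := α) μ
  have hc : 0 ≤ (ent α μ + 2*ε) / Real.log α + ε := by positivity
  filter_upwards [ae_eventually_good hα μ hε, ae_pos hα hβ hp0 hp1 μ hinv,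
    ae_LL_le hα hβ hp0 hp1 μ hinv] with x hgood hpos hLL
  have hfreq : ∃ᶠ n : ℕ in atTop, SR α μ n x ≤ n * (ent α μ + ε) := by
    by_contra hcon
    rw [Filter.not_frequently] at hcon
    have hev : ∀ᶠ n : ℕ in atTop,
        ENNReal.ofReal (ent α μ + ε) ≤ ENNReal.ofReal (SR α μ n x / n) := by
      filter_upwards [hcon, eventually_ge_atTop 1] with n hn hn1
      push_neg at hn
      have hnR : (0:ℝ) < (n:ℝ) := by exact_mod_cast hn1
      apply ENNReal.ofReal_le_ofReal
      rw [le_div_iff₀ hnR]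
      nlinarith [hn.le]
    have hliminf : ENNReal.ofReal (ent α μ + ε) ≤ LL α μ x := by
      rw [LL, liminf_eq]
      exact le_sSup hev
    have hle := le_trans hliminf hLL
    rw [ENNReal.ofReal_le_ofReal_iff hent0] at hle
    linarith
  set u := (Th μ ⌊x⌋).toReal with hu
  have hu0 : 0 < u := ENNReal.toReal_pos hpos.1.ne' (measure_ne_top μ _)
  obtain ⟨N₀, hN₀⟩ := exists_nat_gt (|Real.log u| / (ε * Real.log α))
  have hcomb : ∃ᶠ n : ℕ in atTop,
      (SR α μ n x ≤ n * (ent α μ + ε)) ∧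
      (ENNReal.ofReal (Real.exp (-ε)) ^ n * qfn α n μ (Psi α n x)
        ≤ μ (Psi α n ⁻¹' {Psi α n x})) ∧ (max 1 N₀ ≤ n) :=
    (hfreq.and_eventually (hgood.and (eventually_ge_atTop (max 1 N₀)))).mono
      (fun n h => ⟨h.1, h.2.1, h.2.2⟩)
  apply liminf_le_of_freq μ x _ hc hα
  apply hcomb.mono
  rintro n ⟨h1, h2, h3⟩
  have hn1 : 1 ≤ n := le_trans (le_max_left _ _) h3
  have hnN : N₀ ≤ n := le_trans (le_max_right _ _) h3
  have hnR : (0:ℝ) < (n:ℝ) := by exact_mod_cast hn1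
  have hρpos : ∀ i : ℕ, 0 < (th α μ (dg α (i+1) x)).toReal :=
    fun i => ENNReal.toReal_pos (hpos.2 (i+1)).ne' (measure_ne_top μ _)
  -- identify qfn with an explicit exponential
  have hprod : (∏ i : Fin n, th α μ (dg α ((i:ℕ)+1) x))
      = ENNReal.ofReal (Real.exp (-(SR α μ n x))) := by
    rw [Fin.prod_univ_eq_prod_range (fun i => th α μ (dg α (i+1) x)) n]
    have h1 : ∀ i ∈ Finset.range n, th α μ (dg α (i+1) x)
        = ENNReal.ofReal ((th α μ (dg α (i+1) x)).toReal) :=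
      fun i _ => (ENNReal.ofReal_toReal (measure_ne_top μ _)).symm
    rw [Finset.prod_congr rfl h1,
      ← ENNReal.ofReal_prod_of_nonneg (fun i _ => (hρpos i).le)]
    congr 1
    have h2 : -(SR α μ n x)
        = ∑ i ∈ Finset.range n, Real.log ((th α μ (dg α (i+1) x)).toReal) := by
      simp [SR, wre, Finset.sum_neg_distrib]
    rw [h2, Real.exp_sum]
    exact Finset.prod_congr rfl (fun i _ => (Real.exp_log (hρpos i)).symm)
  have hqfn : ENNReal.ofReal (Real.exp (-ε)) ^ n * qfn α n μ (Psi α n x)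
      = ENNReal.ofReal (Real.exp (-(ε*n)) * (u * Real.exp (-(SR α μ n x)))) := by
    have hqdef : qfn α n μ (Psi α n x)
        = Th μ ⌊x⌋ * ∏ i : Fin n, th α μ (dg α ((i:ℕ)+1) x) := rfl
    rw [hqdef, hprod]
    have hTh : Th μ ⌊x⌋ = ENNReal.ofReal u :=
      (ENNReal.ofReal_toReal (measure_ne_top μ _)).symm
    rw [hTh, ← ENNReal.ofReal_pow (Real.exp_nonneg _), ← ENNReal.ofReal_mul hu0.le,
      ← ENNReal.ofReal_mul (by positivity : (0:ℝ) ≤ Real.exp (-ε) ^ n)]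
    congr 1
    rw [← Real.exp_nat_mul]
    congr 1
    ring
  -- ball measure lower bound
  set b : ℝ := u * Real.exp (-((n:ℝ) * (ent α μ + 2*ε))) with hb
  have hbpos : 0 < b := by positivity
  have hball : ENNReal.ofReal b ≤ μ (Metric.ball x (((α:ℝ)^n)⁻¹)) := by
    have step1 : ENNReal.ofReal b
        ≤ ENNReal.ofReal (Real.exp (-(ε*n)) * (u * Real.exp (-(SR α μ n x)))) := by
      apply ENNReal.ofReal_le_ofReal
      rw [hb]
      have hexp : Real.exp (-((n:ℝ) * (ent α μ + 2*ε)))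
          = Real.exp (-(ε*n)) * Real.exp (-((n:ℝ)*(ent α μ + ε))) := by
        rw [← Real.exp_add]
        ring_nf
      rw [hexp]
      have hSR : Real.exp (-((n:ℝ)*(ent α μ + ε))) ≤ Real.exp (-(SR α μ n x)) := by
        apply Real.exp_le_exp.mpr
        simp only [neg_le_neg_iff]
        exact h1
      calc u * (Real.exp (-(ε*n)) * Real.exp (-((n:ℝ)*(ent α μ + ε))))
          ≤ u * (Real.exp (-(ε*n)) * Real.exp (-(SR α μ n x))) := by
            apply mul_le_mul_of_nonneg_left _ hu0.le
            exact mul_le_mul_of_nonneg_left hSR (Real.exp_nonneg _)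
        _ = Real.exp (-(ε*n)) * (u * Real.exp (-(SR α μ n x))) := by ring
    calc ENNReal.ofReal b
        ≤ ENNReal.ofReal (Real.exp (-(ε*n)) * (u * Real.exp (-(SR α μ n x)))) := step1
      _ = ENNReal.ofReal (Real.exp (-ε)) ^ n * qfn α n μ (Psi α n x) := hqfn.symm
      _ ≤ μ (Psi α n ⁻¹' {Psi α n x}) := h2
      _ ≤ μ (Metric.ball x (((α:ℝ)^n)⁻¹)) := measure_mono (cyl_subset_ball hα n x)
  have htoReal : b ≤ (μ (Metric.ball x (((α:ℝ)^n)⁻¹))).toReal := by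
    have := ENNReal.toReal_mono (measure_ne_top μ _) hball
    rwa [ENNReal.toReal_ofReal hbpos.le] at this
  have hlogb : Real.log b ≤ Real.log (μ (Metric.ball x (((α:ℝ)^n)⁻¹))).toReal :=
    Real.log_le_log hbpos htoReal
  have hlogbval : Real.log b = Real.log u - (n:ℝ) * (ent α μ + 2*ε) := by
    rw [hb, Real.log_mul hu0.ne' (Real.exp_ne_zero _), Real.log_exp]
    ring
  have hden : Real.log (((α:ℝ)^n)⁻¹) = -((n:ℝ) * Real.log α) := by
    rw [Real.log_inv, Real.log_pow]
  rw [hden, div_neg, ← neg_div, div_le_iff₀ (by positivity)]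
  have hNle : (N₀:ℝ) ≤ (n:ℝ) := by exact_mod_cast hnN
  have hlogu : |Real.log u| < (N₀:ℝ) * (ε * Real.log α) := by
    rw [div_lt_iff₀ (by positivity)] at hN₀
    exact hN₀
  have hA : Real.log u - (n:ℝ)*(ent α μ + 2*ε)
      ≤ Real.log (μ (Metric.ball x (((α:ℝ)^n)⁻¹))).toReal := by
    rw [← hlogbval]; exact hlogb
  have habs : -Real.log u ≤ |Real.log u| := neg_le_abs _
  have hexpand : ((ent α μ + 2*ε) / Real.log α + ε) * ((n:ℝ) * Real.log α)
      = (n:ℝ)*(ent α μ + 2*ε) + ε * ((n:ℝ) * Real.log α) := by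
    field_simp
  rw [hexpand]
  have hstep : (N₀:ℝ) * (ε * Real.log α) ≤ (n:ℝ) * (ε * Real.log α) :=
    mul_le_mul_of_nonneg_right hNle (by positivity)
  nlinarith [hA, hlogu, hstep]

lemma th_eq_xi (hα : 2 ≤ α) (μ : Measure ℝ) [IsProbabilityMeasure μ]
    (hsupp : μ (Ici (0:ℝ)) = 1) {k : ℕ} (hk : k < α) :
    (th α μ k).toReal = xi α μ k := by
  have hαZ : (0:ℤ) < (α:ℤ) := by exact_mod_cast Nat.lt_of_lt_of_le Nat.zero_lt_two hα
  have hα1 : (1:ℝ) ≤ (α:ℝ) := by exact_mod_cast le_trans one_le_two hα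
  have hneg : μ (Iio (0:ℝ)) = 0 := by
    have h := measure_compl measurableSet_Ici (measure_ne_top μ (Ici (0:ℝ)))
    rw [hsupp, compl_Ici, measure_univ] at h
    simpa using h
  have hdg0 : ∀ x : ℝ, dg α 0 x = (⌊x⌋ % (α:ℤ)).toNat := by
    intro x; unfold dg; norm_num
  have hseteq : {x : ℝ | dg α 0 x = k} ∩ Ici (0:ℝ)
      = ⋃ m : ℕ, Ico ((m:ℝ) * α + k) ((m:ℝ) * α + k + 1) := by
    ext x
    simp only [mem_inter_iff, mem_setOf_eq, mem_Ici, mem_iUnion, mem_Ico]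
    constructor
    · rintro ⟨hdg, hx0⟩
      rw [hdg0 x] at hdg
      have hz0 : (0:ℤ) ≤ ⌊x⌋ := Int.floor_nonneg.mpr hx0
      have hemod := Int.emod_nonneg ⌊x⌋ hαZ.ne'
      have hmod : ⌊x⌋ % (α:ℤ) = (k:ℤ) := by omega
      obtain ⟨q, hq⟩ : ∃ q : ℤ, q = ⌊x⌋ / (α:ℤ) := ⟨_, rfl⟩
      have hq0 : 0 ≤ q := hq ▸ Int.ediv_nonneg hz0 hαZ.le
      have hzeq : ⌊x⌋ = (α:ℤ) * q + k := by
        rw [hq]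
        have := Int.mul_ediv_add_emod ⌊x⌋ (α:ℤ)
        omega
      have hfl : ((⌊x⌋ : ℤ) : ℝ) = (α:ℝ) * (q:ℝ) + (k:ℝ) := by
        exact_mod_cast congrArg (Int.cast : ℤ → ℝ) hzeq
      have hqq : ((q.toNat : ℕ) : ℝ) = (q:ℝ) := by exact_mod_cast Int.toNat_of_nonneg hq0
      have hle := Int.floor_le x
      have hlt := Int.lt_floor_add_one x
      rw [hfl] at hle hlt
      exact ⟨q.toNat, by rw [hqq]; linarith, by rw [hqq]; linarith⟩
    · rintro ⟨m, hm1, hm2⟩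
      have hk0 : (0:ℝ) ≤ (m:ℝ) * α + k := by positivity
      have hx0 : (0:ℝ) ≤ x := le_trans hk0 hm1
      have hfloor : ⌊x⌋ = (m:ℤ) * α + k := by
        apply Int.floor_eq_iff.mpr
        constructor <;> push_cast <;> linarith
      refine ⟨?_, hx0⟩
      rw [hdg0 x, hfloor]
      have hmod : ((m:ℤ) * α + k) % (α:ℤ) = (k:ℤ) := by
        have h1 : (m:ℤ) * α + k = (k:ℤ) + (α:ℤ) * m := by ring
        rw [h1, Int.add_mul_emod_self_left]
        exact Int.emod_eq_of_lt (by positivity) (by exact_mod_cast hk)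
      rw [hmod]
      exact Int.toNat_natCast k
  have hdisj : Pairwise (Function.onFun Disjoint
      fun m : ℕ => Ico ((m:ℝ) * α + k) ((m:ℝ) * α + k + 1)) := by
    intro m m' hmm
    simp only [Function.onFun]
    apply Set.disjoint_left.mpr
    rintro x ⟨h1, h2⟩ ⟨h3, h4⟩
    rcases hmm.lt_or_gt with h | h
    · have hmc : (m:ℝ) + 1 ≤ (m':ℝ) := by exact_mod_cast h
      nlinarith
    · have hmc : (m':ℝ) + 1 ≤ (m:ℝ) := by exact_mod_cast h
      nlinarith
  have hrestrict : th α μ k = μ ({x : ℝ | dg α 0 x = k} ∩ Ici (0:ℝ)) := by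
    have hd : {x : ℝ | dg α 0 x = k} ∩ Ici (0:ℝ) = {x : ℝ | dg α 0 x = k} \ Iio (0:ℝ) := by
      rw [diff_eq, compl_Iio]
    rw [hd, measure_diff_null hneg]
    rfl
  rw [hrestrict, hseteq, measure_iUnion hdisj (fun m => measurableSet_Ico)]
  rfl

end Stmt11Aux

open Stmt11Aux in
/-- First part of the main theorem:
`dim_H^* π ≤ (Σ_{i=0}^{α-1} ξ_i·log ξ_i)/log(α⁻¹)` (with `0·log 0 = 0`, which is
automatic since `Real.log 0 = 0`). -/
theorem stmt11 (α β : ℕ) (hα : 2 ≤ α) (hβ : 1 ≤ β) (p : ℝ) (hp0 : 0 < p) (hp1 : p < 1)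
    (π : Measure ℝ) [IsProbabilityMeasure π] (hsupp : π (Ici (0 : ℝ)) = 1)
    (hinv : ∀ A : Set ℝ, MeasurableSet A →
      π A = ENNReal.ofReal p * π ((fun y => y + (β : ℝ)) ⁻¹' A)
          + ENNReal.ofReal (1 - p) * π ((fun y => y / (α : ℝ)) ⁻¹' A)) :
    sInf {s : ℝ | ∀ᵐ x ∂π, lowerLocalDim π x ≤ s} ≤
      (∑ i ∈ Finset.range α, xi α π i * Real.log (xi α π i)) / Real.log ((α : ℝ)⁻¹) := by
  have hαR : (1:ℝ) < (α:ℝ) := by exact_mod_cast Nat.lt_of_lt_of_le Nat.one_lt_two hα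
  have hlogα : 0 < Real.log α := Real.log_pos hαR
  -- identify RHS with ent/log α
  have hRHS : (∑ i ∈ Finset.range α, xi α π i * Real.log (xi α π i)) / Real.log ((α : ℝ)⁻¹)
      = ent α π / Real.log α := by
    rw [Real.log_inv]
    have : (∑ i ∈ Finset.range α, xi α π i * Real.log (xi α π i)) = - ent α π := by
      rw [ent, ← Finset.sum_neg_distrib]
      apply Finset.sum_congr rfl
      intro k hk
      rw [th_eq_xi hα π hsupp (Finset.mem_range.mp hk)]
      ring
    rw [this]
    rw [neg_div_neg_eq]
  rw [hRHS]
  set S := {s : ℝ | ∀ᵐ x ∂π, lowerLocalDim π x ≤ s} with hS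
  have hbdd : BddBelow S := by
    refine ⟨0, fun s hs => ?_⟩
    have hne : (MeasureTheory.ae π).NeBot := ae_neBot.mpr (IsProbabilityMeasure.ne_zero π)
    have hs' : ∀ᵐ x ∂π, lowerLocalDim π x ≤ s := hs
    obtain ⟨x, hx⟩ := hs'.exists
    exact le_trans (lowerLocalDim_nonneg π x) hx
  have hmem : ∀ ε : ℝ, 0 < ε → sInf S ≤ (ent α π + 2*ε) / Real.log α + ε := by
    intro ε hε
    exact csInf_le hbdd (dim_ae_le hα hβ hp0 hp1 π hinv hε)
  -- conclude
  have key : ∀ ε' : ℝ, 0 < ε' → sInf S ≤ ent α π / Real.log α + ε' := by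
    intro ε' hε'
    have hC : 0 < 2 / Real.log α + 1 := by positivity
    have hε : 0 < ε' / (2 / Real.log α + 1) := by positivity
    refine le_trans (hmem _ hε) (le_of_eq ?_)
    field_simp
    ring
  exact le_of_forall_pos_le_add key
end
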